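/- arXiv:0911.1923 — 4 statements merged into one kernel-verified Lean document; each statement's English description precedes it below -/
import Mathlib

section
/- Let w ∈ W_n have word form w = i_1 i_2 ⋯ i_k \bar{a} i_{k+1} ⋯ i_n, where i_1, …, i_k and a are strictly positive, and let w_1 ∈ W_n be the element with word form a i_1 i_2 ⋯ i_k i_{k+1} ⋯ i_n. Then w = w_1 s_0 s_1 s_2 ⋯ s_k and ℓ(w) = ℓ(w_1) + k + 1; in particular, appending s_0 s_1 ⋯ s_k to any reduced expression of w_1 yields a reduced expression of w. -/
/-- `w` belongs to the group `W_n` of signed permutations of `I_n = {-n, …, -1, 1, …, n}`: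
it is a permutation of `ℤ` commuting with negation and fixing every integer of absolute
value greater than `n` (whence it also fixes `0`). -/
def IsSigned (n : ℕ) (w : Equiv.Perm ℤ) : Prop :=
  (∀ i : ℤ, w (-i) = -(w i)) ∧ ∀ i : ℤ, (n : ℤ) < |i| → w i = i

/-- the Coxeter generators `s_0, s_1, …` of the signed permutation group:
`s_0 = (-1, 1)` and `s_i = (i, i+1)(-i, -(i+1))`. -/
def genB : ℕ → Equiv.Perm ℤ
  | 0 => Equiv.swap (-1) 1
  | (i + 1) =>
      Equiv.swap ((i : ℤ) + 1) ((i : ℤ) + 2) * Equiv.swap (-((i : ℤ) + 1)) (-((i : ℤ) + 2))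

/-- a word in the generators `s_0, …, s_{n-1}` -/
def IsWordB (n : ℕ) (l : List ℕ) : Prop := ∀ i ∈ l, i < n

/-- the product of the generators along a word (left-to-right) -/
def wordProd (l : List ℕ) : Equiv.Perm ℤ := (l.map genB).prod

/-- the Coxeter length of `w` with respect to `s_0, …, s_{n-1}` -/
noncomputable def lenB (n : ℕ) (w : Equiv.Perm ℤ) : ℕ :=
  sInf {k | ∃ l : List ℕ, IsWordB n l ∧ wordProd l = w ∧ l.length = k}

/-- `l` is a reduced expression for `w` -/
def IsReducedB (n : ℕ) (w : Equiv.Perm ℤ) (l : List ℕ) : Prop :=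
  IsWordB n l ∧ wordProd l = w ∧ l.length = lenB n w

/-- the forbidden patterns: `s_a s_{a+1} s_a` with `a ≥ 1`, and `s_a s_{a-1} s_a`
with `a ≥ 1` (so `s_0 s_1 s_0` is allowed while `s_1 s_0 s_1` is not). -/
def BadTriple (a b c : ℕ) : Prop := a = c ∧ ((1 ≤ a ∧ b = a + 1) ∨ a = b + 1)

/-- membership in `W_b`: no reduced expression contains a forbidden
consecutive triple of generators. -/
def InWb (n : ℕ) (w : Equiv.Perm ℤ) : Prop :=
  IsSigned n w ∧
    ∀ l : List ℕ, IsReducedB n w l → ¬∃ a b c : ℕ, [a, b, c] <:+: l ∧ BadTriple a b c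

/-- the word form of `w`, i.e. the list `w 1, w 2, …, w n` -/
def wordFormB (n : ℕ) (w : Equiv.Perm ℤ) : List ℤ :=
  (List.range n).map fun j => w ((j : ℤ) + 1)

section Aux

lemma genB_zero_apply (x : ℤ) : genB 0 x = if x = 1 then -1 else if x = -1 then 1 else x := by
  simp only [genB, Equiv.swap_apply_def]
  split_ifs <;> omega

lemma genB_succ_apply (m : ℕ) (x : ℤ) : genB (m+1) x =
    if x = (m:ℤ)+1 then (m:ℤ)+2 else if x = (m:ℤ)+2 then (m:ℤ)+1
    else if x = -((m:ℤ)+1) then -((m:ℤ)+2) else if x = -((m:ℤ)+2) then -((m:ℤ)+1) else x := by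
  simp only [genB, Equiv.Perm.mul_apply, Equiv.swap_apply_def]
  split_ifs <;> omega

lemma genB_sq (m : ℕ) : genB m * genB m = 1 := by
  ext x
  cases m with
  | zero =>
      simp only [Equiv.Perm.mul_apply, Equiv.Perm.one_apply, genB_zero_apply]
      split_ifs <;> first | (exact ‹False›.elim) | omega
  | succ m =>
      simp only [Equiv.Perm.mul_apply, Equiv.Perm.one_apply, genB_succ_apply]
      split_ifs <;> first | (exact ‹False›.elim) | omega

lemma isSigned_one (n : ℕ) : IsSigned n 1 := ⟨fun i => rfl, fun i _ => rfl⟩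

lemma isSigned_mul {n : ℕ} {w v : Equiv.Perm ℤ} (hw : IsSigned n w) (hv : IsSigned n v) :
    IsSigned n (w * v) := by
  constructor
  · intro i
    simp only [Equiv.Perm.mul_apply, hv.1, hw.1]
  · intro i hi
    simp only [Equiv.Perm.mul_apply, hv.2 i hi, hw.2 i hi]

lemma genB_signed {m n : ℕ} (h : m < n) : IsSigned n (genB m) := by
  cases m with
  | zero =>
      constructor
      · intro i; rw [genB_zero_apply, genB_zero_apply]; split_ifs <;> omega
      · intro i hi; rw [lt_abs] at hi; rw [genB_zero_apply]; split_ifs <;> omega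
  | succ m =>
      constructor
      · intro i; rw [genB_succ_apply, genB_succ_apply]; split_ifs <;> omega
      · intro i hi; rw [lt_abs] at hi; rw [genB_succ_apply]; split_ifs <;> omega

lemma wordProd_nil : wordProd [] = 1 := rfl

lemma wordProd_append (l l' : List ℕ) : wordProd (l ++ l') = wordProd l * wordProd l' := by
  simp [wordProd]

lemma wordProd_singleton (m : ℕ) : wordProd [m] = genB m := by simp [wordProd]

lemma wordProd_signed {n : ℕ} {l : List ℕ} (h : IsWordB n l) : IsSigned n (wordProd l) := by
  induction l with
  | nil => exact isSigned_one n
  | cons m l ih =>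
      have : wordProd (m :: l) = genB m * wordProd l := by simp [wordProd]
      rw [this]
      exact isSigned_mul (genB_signed (h m (List.mem_cons_self)))
        (ih fun i hi => h i (List.mem_cons_of_mem m hi))

noncomputable def Aset (n : ℕ) (w : Equiv.Perm ℤ) : Finset (ℤ × ℤ) :=
  (Finset.Icc 1 (n:ℤ) ×ˢ Finset.Icc 1 (n:ℤ)).filter fun p => p.1 < p.2 ∧ w p.2 < w p.1

noncomputable def Bset (n : ℕ) (w : Equiv.Perm ℤ) : Finset (ℤ × ℤ) :=
  (Finset.Icc 1 (n:ℤ) ×ˢ Finset.Icc 1 (n:ℤ)).filter fun p => p.1 < p.2 ∧ w p.1 + w p.2 < 0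

noncomputable def Cset (n : ℕ) (w : Equiv.Perm ℤ) : Finset ℤ :=
  (Finset.Icc (1:ℤ) (n:ℤ)).filter fun i => w i < 0

noncomputable def LB (n : ℕ) (w : Equiv.Perm ℤ) : ℕ := (Aset n w).card + (Bset n w).card + (Cset n w).card

lemma mem_Aset {n : ℕ} {w : Equiv.Perm ℤ} {p : ℤ × ℤ} :
    p ∈ Aset n w ↔ (1 ≤ p.1 ∧ p.1 ≤ n) ∧ (1 ≤ p.2 ∧ p.2 ≤ n) ∧ p.1 < p.2 ∧ w p.2 < w p.1 := by
  simp [Aset, Finset.mem_filter, Finset.mem_product, Finset.mem_Icc, and_assoc]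

lemma mem_Bset {n : ℕ} {w : Equiv.Perm ℤ} {p : ℤ × ℤ} :
    p ∈ Bset n w ↔ (1 ≤ p.1 ∧ p.1 ≤ n) ∧ (1 ≤ p.2 ∧ p.2 ≤ n) ∧ p.1 < p.2 ∧ w p.1 + w p.2 < 0 := by
  simp [Bset, Finset.mem_filter, Finset.mem_product, Finset.mem_Icc, and_assoc]

lemma mem_Cset {n : ℕ} {w : Equiv.Perm ℤ} {i : ℤ} :
    i ∈ Cset n w ↔ 1 ≤ i ∧ i ≤ n ∧ w i < 0 := by
  simp [Cset, Finset.mem_filter, Finset.mem_Icc, and_assoc]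

lemma LB_one (n : ℕ) : LB n 1 = 0 := by
  have hA : Aset n 1 = ∅ := by
    rw [Finset.eq_empty_iff_forall_notMem]; intro p hp; rw [mem_Aset] at hp
    simp only [Equiv.Perm.one_apply] at hp; omega
  have hB : Bset n 1 = ∅ := by
    rw [Finset.eq_empty_iff_forall_notMem]; intro p hp; rw [mem_Bset] at hp
    simp only [Equiv.Perm.one_apply] at hp; omega
  have hC : Cset n 1 = ∅ := by
    rw [Finset.eq_empty_iff_forall_notMem]; intro i hi; rw [mem_Cset] at hi
    simp only [Equiv.Perm.one_apply] at hi; omega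
  simp [LB, hA, hB, hC]

lemma LB_s0_pos {n : ℕ} (hn : 1 ≤ n) {w : Equiv.Perm ℤ} (hodd : w (-1) = -(w 1))
    (hp : 0 < w 1) : LB n (w * genB 0) = LB n w + 1 := by
  set w' := w * genB 0 with hw'
  have h1 : w' 1 = -(w 1) := by
    have : genB 0 1 = -1 := by rw [genB_zero_apply]; norm_num
    rw [hw', Equiv.Perm.mul_apply, this, hodd]
  have hx : ∀ x : ℤ, 2 ≤ x → w' x = w x := by
    intro x hx2
    have : genB 0 x = x := by rw [genB_zero_apply]; split_ifs <;> omega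
    rw [hw', Equiv.Perm.mul_apply, this]
  have E1 : (Aset n w').filter (fun p => p.1 = 1) = (Bset n w).filter (fun p => p.1 = 1) := by
    ext p
    simp only [Finset.mem_filter, mem_Aset, mem_Bset]
    constructor
    · rintro ⟨⟨hb1, hb2, hlt, hc⟩, he⟩
      rw [he, h1] at hc
      rw [hx p.2 (by omega)] at hc
      exact ⟨⟨hb1, hb2, hlt, by rw [he]; linarith⟩, he⟩
    · rintro ⟨⟨hb1, hb2, hlt, hc⟩, he⟩
      refine ⟨⟨hb1, hb2, hlt, ?_⟩, he⟩
      rw [he, h1, hx p.2 (by omega)]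
      rw [he] at hc; linarith
  have E2 : (Aset n w').filter (fun p => ¬ p.1 = 1) = (Aset n w).filter (fun p => ¬ p.1 = 1) := by
    ext p
    simp only [Finset.mem_filter, mem_Aset]
    constructor
    · rintro ⟨⟨hb1, hb2, hlt, hc⟩, he⟩
      rw [hx p.1 (by omega), hx p.2 (by omega)] at hc
      exact ⟨⟨hb1, hb2, hlt, hc⟩, he⟩
    · rintro ⟨⟨hb1, hb2, hlt, hc⟩, he⟩
      rw [← hx p.1 (by omega), ← hx p.2 (by omega)] at hc
      exact ⟨⟨hb1, hb2, hlt, hc⟩, he⟩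
  have E3 : (Bset n w').filter (fun p => p.1 = 1) = (Aset n w).filter (fun p => p.1 = 1) := by
    ext p
    simp only [Finset.mem_filter, mem_Aset, mem_Bset]
    constructor
    · rintro ⟨⟨hb1, hb2, hlt, hc⟩, he⟩
      rw [he, h1, hx p.2 (by omega)] at hc
      exact ⟨⟨hb1, hb2, hlt, by rw [he]; linarith⟩, he⟩
    · rintro ⟨⟨hb1, hb2, hlt, hc⟩, he⟩
      refine ⟨⟨hb1, hb2, hlt, ?_⟩, he⟩
      rw [he, h1, hx p.2 (by omega)]
      rw [he] at hc; linarith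
  have E4 : (Bset n w').filter (fun p => ¬ p.1 = 1) = (Bset n w).filter (fun p => ¬ p.1 = 1) := by
    ext p
    simp only [Finset.mem_filter, mem_Bset]
    constructor
    · rintro ⟨⟨hb1, hb2, hlt, hc⟩, he⟩
      rw [hx p.1 (by omega), hx p.2 (by omega)] at hc
      exact ⟨⟨hb1, hb2, hlt, hc⟩, he⟩
    · rintro ⟨⟨hb1, hb2, hlt, hc⟩, he⟩
      rw [← hx p.1 (by omega), ← hx p.2 (by omega)] at hc
      exact ⟨⟨hb1, hb2, hlt, hc⟩, he⟩
  have hCeq : Cset n w' = insert 1 (Cset n w) := by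
    ext i
    simp only [mem_Cset, Finset.mem_insert]
    constructor
    · rintro ⟨hi1, hin, hc⟩
      by_cases h : i = 1
      · exact Or.inl h
      · exact Or.inr ⟨hi1, hin, by rwa [hx i (by omega)] at hc⟩
    · rintro (h | ⟨hi1, hin, hc⟩)
      · subst h
        exact ⟨le_refl 1, by exact_mod_cast hn, by rw [h1]; linarith⟩
      · by_cases h : i = 1
        · subst h; linarith
        · exact ⟨hi1, hin, by rwa [hx i (by omega)]⟩
  have h1C : (1:ℤ) ∉ Cset n w := by
    rw [mem_Cset]; push_neg; intro _ _; linarith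
  have hC : (Cset n w').card = (Cset n w).card + 1 := by
    rw [hCeq, Finset.card_insert_of_notMem h1C]
  have splitA' := Finset.card_filter_add_card_filter_not
    (s := Aset n w') (p := fun p => p.1 = 1)
  have splitB' := Finset.card_filter_add_card_filter_not
    (s := Bset n w') (p := fun p => p.1 = 1)
  have splitA := Finset.card_filter_add_card_filter_not
    (s := Aset n w) (p := fun p => p.1 = 1)
  have splitB := Finset.card_filter_add_card_filter_not
    (s := Bset n w) (p := fun p => p.1 = 1)
  simp only [LB]
  rw [E1, E2] at splitA'
  rw [E3, E4] at splitB'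
  omega


def tauB (t x : ℤ) : ℤ := if x = t then t+1 else if x = t+1 then t else x

def FB (t : ℤ) (p : ℤ × ℤ) : ℤ × ℤ :=
  if p.1 = t ∧ p.2 = t+1 then p else (tauB t p.1, tauB t p.2)

lemma tauB_invol (t x : ℤ) : tauB t (tauB t x) = x := by
  unfold tauB; split_ifs <;> omega

lemma FB_invol (t : ℤ) (p : ℤ × ℤ) (h : p.1 < p.2) : FB t (FB t p) = p := by
  obtain ⟨x, y⟩ := p
  simp only [FB, tauB] at *
  split_ifs <;> simp_all <;> omega

lemma FB_fst (t : ℤ) (p : ℤ × ℤ) (h : ¬ (p.1 = t ∧ p.2 = t+1)) :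
    (FB t p).1 = tauB t p.1 ∧ (FB t p).2 = tauB t p.2 := by
  rw [FB, if_neg h]; exact ⟨rfl, rfl⟩

lemma LB_sm_pos {n m : ℕ} (hmn : m + 2 ≤ n) {w : Equiv.Perm ℤ}
    (hp : w ((m:ℤ)+1) < w ((m:ℤ)+2)) : LB n (w * genB (m+1)) = LB n w + 1 := by
  set t : ℤ := (m:ℤ)+1 with ht
  set w' := w * genB (m+1) with hw'
  have hx : ∀ x : ℤ, 1 ≤ x → w' x = w (tauB t x) := by
    intro x hx1
    have : genB (m+1) x = tauB t x := by
      rw [genB_succ_apply]; unfold tauB; split_ifs <;> omega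
    rw [hw', Equiv.Perm.mul_apply, this]
  have htmem : ∀ x : ℤ, 1 ≤ x → x ≤ n → 1 ≤ tauB t x ∧ tauB t x ≤ n := by
    intro x h1 h2; unfold tauB; split_ifs <;> omega
  have htt : tauB t t = t + 1 := by unfold tauB; simp
  have htt1 : tauB t (t+1) = t := by unfold tauB; split_ifs <;> omega
  have hp2 : w t < w (t + 1) := by
    have e : t + 1 = (m:ℤ) + 2 := by rw [ht]; ring
    rw [e]; exact hp
  -- C is invariant
  have hC : (Cset n w').card = (Cset n w).card := by
    apply Finset.card_nbij' (i := tauB t) (j := tauB t)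
    · intro i hi; rw [Finset.mem_coe] at hi ⊢
      rw [mem_Cset] at hi ⊢
      refine ⟨(htmem i hi.1 hi.2.1).1, (htmem i hi.1 hi.2.1).2, ?_⟩
      rw [← hx i hi.1]; exact hi.2.2
    · intro i hi; rw [Finset.mem_coe] at hi ⊢
      rw [mem_Cset] at hi ⊢
      refine ⟨(htmem i hi.1 hi.2.1).1, (htmem i hi.1 hi.2.1).2, ?_⟩
      rw [hx _ (htmem i hi.1 hi.2.1).1, tauB_invol]; exact hi.2.2
    · intro i _; exact tauB_invol t i
    · intro i _; exact tauB_invol t i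
  -- B is invariant
  have hB : (Bset n w').card = (Bset n w).card := by
    apply Finset.card_nbij' (i := FB t) (j := FB t)
    · intro p hp'; rw [Finset.mem_coe] at hp' ⊢
      rw [mem_Bset] at hp' ⊢
      obtain ⟨⟨h11, h12⟩, ⟨h21, h22⟩, hlt, hc⟩ := hp'
      rw [hx p.1 h11, hx p.2 h21] at hc
      by_cases hcase : p.1 = t ∧ p.2 = t+1
      · rw [FB, if_pos hcase]
        refine ⟨⟨h11, h12⟩, ⟨h21, h22⟩, hlt, ?_⟩
        rw [hcase.1, hcase.2] at hc ⊢
        rw [htt, htt1] at hc; linarith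
      · obtain ⟨e1, e2⟩ := FB_fst t p hcase
        rw [e1, e2]
        refine ⟨⟨(htmem p.1 h11 h12).1, (htmem p.1 h11 h12).2⟩,
          ⟨(htmem p.2 h21 h22).1, (htmem p.2 h21 h22).2⟩, ?_, hc⟩
        revert hcase hlt; unfold tauB; split_ifs <;> omega
    · intro p hp'; rw [Finset.mem_coe] at hp' ⊢
      rw [mem_Bset] at hp' ⊢
      obtain ⟨⟨h11, h12⟩, ⟨h21, h22⟩, hlt, hc⟩ := hp'
      by_cases hcase : p.1 = t ∧ p.2 = t+1
      · rw [FB, if_pos hcase]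
        refine ⟨⟨h11, h12⟩, ⟨h21, h22⟩, hlt, ?_⟩
        rw [hx p.1 h11, hx p.2 h21, hcase.1, hcase.2, htt, htt1]
        rw [hcase.1, hcase.2] at hc; linarith
      · obtain ⟨e1, e2⟩ := FB_fst t p hcase
        rw [e1, e2]
        refine ⟨⟨(htmem p.1 h11 h12).1, (htmem p.1 h11 h12).2⟩,
          ⟨(htmem p.2 h21 h22).1, (htmem p.2 h21 h22).2⟩, ?_, ?_⟩
        · revert hcase hlt; unfold tauB; split_ifs <;> omega
        · rw [hx _ (htmem p.1 h11 h12).1, hx _ (htmem p.2 h21 h22).1,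
            tauB_invol, tauB_invol]; exact hc
    · intro p hp'
      rw [Finset.mem_coe, mem_Bset] at hp'
      exact FB_invol t p hp'.2.2.1
    · intro p hp'
      rw [Finset.mem_coe, mem_Bset] at hp'
      exact FB_invol t p hp'.2.2.1
  -- A goes up by one
  have hprA' : ((t, t+1) : ℤ × ℤ) ∈ Aset n w' := by
    rw [mem_Aset]
    refine ⟨⟨by omega, by omega⟩, ⟨by omega, by omega⟩, by omega, ?_⟩
    simp only
    rw [hx t (by omega), hx (t+1) (by omega), htt, htt1]
    exact hp2
  have hprA : ((t, t+1) : ℤ × ℤ) ∉ Aset n w := by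
    rw [mem_Aset]; push_neg
    intro _ _ _
    exact le_of_lt hp2
  have hAerase : ((Aset n w').erase (t, t+1)).card = ((Aset n w).erase (t, t+1)).card := by
    apply Finset.card_nbij' (i := FB t) (j := FB t)
    · intro p hp'; rw [Finset.mem_coe] at hp' ⊢
      rw [Finset.mem_erase, mem_Aset] at hp'
      obtain ⟨hne, ⟨h11, h12⟩, ⟨h21, h22⟩, hlt, hc⟩ := hp'
      have hcase : ¬ (p.1 = t ∧ p.2 = t+1) := by
        intro ⟨e1, e2⟩; exact hne (Prod.ext e1 e2)
      obtain ⟨e1, e2⟩ := FB_fst t p hcase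
      rw [Finset.mem_erase, mem_Aset, e1, e2]
      rw [hx p.1 h11, hx p.2 h21] at hc
      refine ⟨?_, ⟨(htmem p.1 h11 h12).1, (htmem p.1 h11 h12).2⟩,
        ⟨(htmem p.2 h21 h22).1, (htmem p.2 h21 h22).2⟩, ?_, hc⟩
      · intro hEq
        have f1 : tauB t p.1 = t := by rw [← e1, hEq]
        have f2 : tauB t p.2 = t + 1 := by rw [← e2, hEq]
        unfold tauB at f1 f2
        split_ifs at f1 f2 <;> omega
      · revert hcase hlt; unfold tauB; split_ifs <;> omega
    · intro p hp'; rw [Finset.mem_coe] at hp' ⊢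
      rw [Finset.mem_erase, mem_Aset] at hp'
      obtain ⟨hne, ⟨h11, h12⟩, ⟨h21, h22⟩, hlt, hc⟩ := hp'
      have hcase : ¬ (p.1 = t ∧ p.2 = t+1) := by
        intro ⟨e1, e2⟩; exact hne (Prod.ext e1 e2)
      obtain ⟨e1, e2⟩ := FB_fst t p hcase
      rw [Finset.mem_erase, mem_Aset, e1, e2]
      refine ⟨?_, ⟨(htmem p.1 h11 h12).1, (htmem p.1 h11 h12).2⟩,
        ⟨(htmem p.2 h21 h22).1, (htmem p.2 h21 h22).2⟩, ?_, ?_⟩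
      · intro hEq
        have f1 : tauB t p.1 = t := by rw [← e1, hEq]
        have f2 : tauB t p.2 = t + 1 := by rw [← e2, hEq]
        unfold tauB at f1 f2
        split_ifs at f1 f2 <;> omega
      · revert hcase hlt; unfold tauB; split_ifs <;> omega
      · rw [hx _ (htmem p.1 h11 h12).1, hx _ (htmem p.2 h21 h22).1,
          tauB_invol, tauB_invol]; exact hc
    · intro p hp'
      rw [Finset.mem_coe, Finset.mem_erase, mem_Aset] at hp'
      exact FB_invol t p hp'.2.2.2.1
    · intro p hp'
      rw [Finset.mem_coe, Finset.mem_erase, mem_Aset] at hp'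
      exact FB_invol t p hp'.2.2.2.1
  have hA : (Aset n w').card = (Aset n w).card + 1 := by
    have e1 : ((Aset n w').erase (t, t+1)).card + 1 = (Aset n w').card :=
      Finset.card_erase_add_one hprA'
    have e2 : (Aset n w).erase (t, t+1) = Aset n w := Finset.erase_eq_of_notMem hprA
    rw [e2] at hAerase
    omega
  simp only [LB]
  omega

lemma LB_s0_neg {n : ℕ} (hn : 1 ≤ n) {w : Equiv.Perm ℤ} (hodd : w (-1) = -(w 1))
    (hp : w 1 < 0) : LB n (w * genB 0) + 1 = LB n w := by
  set w' := w * genB 0 with hw'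
  have hback : w' * genB 0 = w := by rw [hw', mul_assoc, genB_sq, mul_one]
  have h1 : w' 1 = -(w 1) := by
    have : genB 0 1 = -1 := by rw [genB_zero_apply]; norm_num
    rw [hw', Equiv.Perm.mul_apply, this, hodd]
  have hm1 : w' (-1) = w 1 := by
    have : genB 0 (-1) = 1 := by rw [genB_zero_apply]; norm_num
    rw [hw', Equiv.Perm.mul_apply, this]
  have hodd' : w' (-1) = -(w' 1) := by rw [hm1, h1]; ring
  have hp' : 0 < w' 1 := by rw [h1]; linarith
  have := LB_s0_pos hn hodd' hp'
  rw [hback] at this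
  omega

lemma LB_sm_neg {n m : ℕ} (hmn : m + 2 ≤ n) {w : Equiv.Perm ℤ}
    (hp : w ((m:ℤ)+2) < w ((m:ℤ)+1)) : LB n (w * genB (m+1)) + 1 = LB n w := by
  set w' := w * genB (m+1) with hw'
  have hback : w' * genB (m+1) = w := by rw [hw', mul_assoc, genB_sq, mul_one]
  have e1 : w' ((m:ℤ)+1) = w ((m:ℤ)+2) := by
    have : genB (m+1) ((m:ℤ)+1) = (m:ℤ)+2 := by rw [genB_succ_apply]; split_ifs <;> omega
    rw [hw', Equiv.Perm.mul_apply, this]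
  have e2 : w' ((m:ℤ)+2) = w ((m:ℤ)+1) := by
    have : genB (m+1) ((m:ℤ)+2) = (m:ℤ)+1 := by rw [genB_succ_apply]; split_ifs <;> omega
    rw [hw', Equiv.Perm.mul_apply, this]
  have hp' : w' ((m:ℤ)+1) < w' ((m:ℤ)+2) := by rw [e1, e2]; exact hp
  have := LB_sm_pos hmn hp'
  rw [hback] at this
  omega

lemma LB_mul_le {n m : ℕ} (hm : m < n) {w : Equiv.Perm ℤ} (hodd : ∀ i : ℤ, w (-i) = -(w i)) :
    LB n (w * genB m) ≤ LB n w + 1 := by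
  cases m with
  | zero =>
      have hn : 1 ≤ n := hm
      have h0 : w 0 = 0 := by
        have := hodd 0
        simp at this
        omega
      rcases lt_trichotomy (w 1) 0 with h | h | h
      · have := LB_s0_neg hn (hodd 1) h; omega
      · exfalso
        have : (1 : ℤ) = 0 := w.injective (by rw [h0, h])
        omega
      · have := LB_s0_pos hn (hodd 1) h; omega
  | succ m =>
      have hmn : m + 2 ≤ n := hm
      rcases lt_trichotomy (w ((m:ℤ)+1)) (w ((m:ℤ)+2)) with h | h | h
      · have := LB_sm_pos hmn h; omega
      · exfalso
        have : ((m:ℤ)+1) = ((m:ℤ)+2) := w.injective h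
        omega
      · have := LB_sm_neg hmn h; omega

lemma exists_descent {n : ℕ} {w : Equiv.Perm ℤ} (hs : IsSigned n w) (hne : w ≠ 1) :
    ∃ m, m < n ∧ LB n (w * genB m) + 1 = LB n w := by
  have h0 : w 0 = 0 := by have := hs.1 0; simp at this; omega
  by_contra hcon
  push_neg at hcon
  -- n must be positive
  rcases Nat.eq_zero_or_pos n with hn0 | hn
  · apply hne
    ext x
    rcases lt_trichotomy x 0 with h | h | h
    · exact hs.2 x (by rw [hn0]; simp; omega)
    · rw [h, h0]; rfl
    · exact hs.2 x (by rw [hn0]; simp; omega)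
  -- all ascents
  have h1 : 0 < w 1 := by
    rcases lt_trichotomy (w 1) 0 with h | h | h
    · exact absurd (LB_s0_neg hn (hs.1 1) h) (hcon 0 hn)
    · exfalso
      have : (1 : ℤ) = 0 := w.injective (by rw [h0, h])
      omega
    · exact h
  have hmono : ∀ m : ℕ, m + 2 ≤ n → w ((m:ℤ)+1) < w ((m:ℤ)+2) := by
    intro m hmn
    rcases lt_trichotomy (w ((m:ℤ)+1)) (w ((m:ℤ)+2)) with h | h | h
    · exact h
    · exfalso
      have : ((m:ℤ)+1) = ((m:ℤ)+2) := w.injective h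
      omega
    · exact absurd (LB_sm_neg hmn h) (hcon (m+1) hmn)
  -- w is increasing hence ≥ identity on [1, n]
  have hge : ∀ i : ℕ, i + 1 ≤ n → ((i:ℤ)+1) ≤ w ((i:ℤ)+1) := by
    intro i
    induction i with
    | zero => intro _; simp; omega
    | succ i ih =>
        intro hin
        have h2 := hmono i (by omega)
        have h3 := ih (by omega)
        have e : ((i+1:ℕ):ℤ)+1 = ((i:ℤ))+2 := by push_cast; ring
        rw [e]
        omega
  have hgeZ : ∀ x : ℤ, 1 ≤ x → x ≤ n → x ≤ w x := by
    intro x hx1 hx2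
    have := hge (x - 1).toNat (by omega)
    have e : (((x-1).toNat : ℤ)) + 1 = x := by omega
    rw [e] at this
    exact this
  have hle : ∀ x : ℤ, 1 ≤ x → x ≤ n → w x ≤ n := by
    intro x hx1 hx2
    by_contra hgt
    push_neg at hgt
    have : w (w x) = w x := hs.2 (w x) (by rw [abs_of_pos (by omega)]; omega)
    have := w.injective this
    omega
  -- strong downward induction: w fixes [1, n]
  have hfix : ∀ d : ℕ, ∀ x : ℤ, 1 ≤ x → x ≤ n → (n:ℤ) - x ≤ d → w x = x := by
    intro d
    induction d with
    | zero =>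
        intro x hx1 hx2 hxd
        have hx : x = n := by omega
        have := hgeZ x hx1 hx2
        have := hle x hx1 hx2
        omega
    | succ d ih =>
        intro x hx1 hx2 hxd
        have hge1 := hgeZ x hx1 hx2
        have hle1 := hle x hx1 hx2
        by_contra hne'
        have hy1 : x + 1 ≤ w x := by omega
        have : w (w x) = w x := by
          rw [ih (w x) (by omega) (by omega) (by omega)]
        have := w.injective this
        omega
  apply hne
  ext x
  simp only [Equiv.Perm.one_apply]
  rcases lt_trichotomy x 0 with h | h | h
  · rcases le_or_gt x (-(n:ℤ)) with h2 | h2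
    · rcases lt_or_eq_of_le h2 with h3 | h3
      · exact hs.2 x (by rw [abs_of_neg h]; omega)
      · have := hfix n (-x) (by omega) (by omega) (by omega)
        have := hs.1 (-x)
        simp at this
        omega
    · have := hfix n (-x) (by omega) (by omega) (by omega)
      have := hs.1 (-x)
      simp at this
      omega
  · rw [h]; exact h0
  · rcases le_or_gt x (n:ℤ) with h2 | h2
    · exact hfix n x (by omega) h2 (by omega)
    · exact hs.2 x (by rw [abs_of_pos h]; omega)

lemma exists_word {n : ℕ} {w : Equiv.Perm ℤ} (hs : IsSigned n w) :
    ∃ l : List ℕ, IsWordB n l ∧ wordProd l = w ∧ l.length = LB n w := by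
  generalize hN : LB n w = N
  induction N using Nat.strong_induction_on generalizing w with
  | _ N IH =>
    by_cases hw1 : w = 1
    · subst hw1
      refine ⟨[], ?_, wordProd_nil, ?_⟩
      · intro i hi; simp at hi
      · rw [LB_one] at hN; simp [hN]
    · obtain ⟨m, hm, hdesc⟩ := exists_descent hs hw1
      have hs' : IsSigned n (w * genB m) := isSigned_mul hs (genB_signed hm)
      obtain ⟨l, hl1, hl2, hl3⟩ := IH (LB n (w * genB m)) (by omega) hs' rfl
      refine ⟨l ++ [m], ?_, ?_, ?_⟩
      · intro i hi
        rcases List.mem_append.mp hi with h | h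
        · exact hl1 i h
        · simp at h; omega
      · rw [wordProd_append, wordProd_singleton, hl2, mul_assoc, genB_sq, mul_one]
      · simp [hl3]; omega

lemma LB_le_word {n : ℕ} (l : List ℕ) (h : IsWordB n l) : LB n (wordProd l) ≤ l.length := by
  induction l using List.reverseRecOn with
  | nil => rw [wordProd_nil, LB_one]; simp
  | append_singleton l m ih =>
      have hl : IsWordB n l := fun i hi => h i (List.mem_append.mpr (Or.inl hi))
      have hm : m < n := h m (List.mem_append.mpr (Or.inr (by simp)))
      have hodd := (wordProd_signed hl).1
      have := LB_mul_le hm (w := wordProd l) hodd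
      rw [wordProd_append, wordProd_singleton]
      simp only [List.length_append, List.length_singleton]
      have := ih hl
      omega

lemma lenB_eq_LB {n : ℕ} {w : Equiv.Perm ℤ} (hs : IsSigned n w) : lenB n w = LB n w := by
  obtain ⟨l, h1, h2, h3⟩ := exists_word hs
  have hub : lenB n w ≤ LB n w := Nat.sInf_le ⟨l, h1, h2, h3⟩
  have hne : {k | ∃ l : List ℕ, IsWordB n l ∧ wordProd l = w ∧ l.length = k}.Nonempty :=
    ⟨LB n w, l, h1, h2, h3⟩
  obtain ⟨l', h1', h2', h3'⟩ := Nat.sInf_mem hne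
  have hlb : LB n w ≤ lenB n w := by
    have := LB_le_word l' h1'
    rw [h2'] at this
    rw [lenB]
    rw [h3'] at this
    exact this
  omega

lemma c_spec (t : ℕ) :
    (∀ x : ℤ, 1 ≤ x → x ≤ (t:ℤ) → wordProd (List.range (t+1)) x = x + 1) ∧
      wordProd (List.range (t+1)) ((t:ℤ)+1) = -1 := by
  induction t with
  | zero =>
      constructor
      · intro x h1 h2; exfalso; omega
      · rw [show List.range 1 = [0] from rfl, wordProd_singleton, genB_zero_apply]; norm_num
  | succ t ih =>
      have hsplit : wordProd (List.range (t+1+1)) = wordProd (List.range (t+1)) * genB (t+1) := by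
        rw [← wordProd_singleton, ← wordProd_append, ← List.range_succ]
      have hfix : ∀ x : ℤ, (t:ℤ)+1 < x → wordProd (List.range (t+1)) x = x := by
        intro x hx
        exact (wordProd_signed (n := t+1) (fun i hi => by simp at hi; omega)).2 x
          (by rw [abs_of_pos (by omega)]; push_cast; omega)
      constructor
      · intro x h1 h2
        rw [hsplit, Equiv.Perm.mul_apply]
        rcases lt_or_ge x ((t:ℤ)+1) with h | h
        · have hg : genB (t+1) x = x := by rw [genB_succ_apply]; split_ifs <;> omega
          rw [hg]; exact ih.1 x h1 (by omega)
        · have hx : x = (t:ℤ)+1 := by push_cast at h2; omega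
          have hg : genB (t+1) x = (t:ℤ)+2 := by rw [genB_succ_apply]; split_ifs <;> omega
          rw [hg, hfix _ (by omega)]; omega
      · rw [hsplit, Equiv.Perm.mul_apply]
        have hg : genB (t+1) (((t+1:ℕ):ℤ)+1) = (t:ℤ)+1 := by
          rw [genB_succ_apply]; split_ifs <;> omega
        rw [hg]; exact ih.2


end Aux

/-- Let `w ∈ W_n` have word form `i_1 ⋯ i_k ā i_{k+1} ⋯ i_n` with `i_1, …, i_k, a > 0`,
and let `w₁ ∈ W_n` have word form `a i_1 ⋯ i_k i_{k+1} ⋯ i_n`.  Then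
`w = w₁ s_0 s_1 ⋯ s_k`, `ℓ(w) = ℓ(w₁) + k + 1`, and appending `s_0 s_1 ⋯ s_k` to any
reduced expression of `w₁` yields a reduced expression of `w`. -/
theorem statement1 (n k : ℕ) (hn : 1 ≤ n) (hk : k + 1 ≤ n) (a : ℤ) (ha : 0 < a)
    (w w₁ : Equiv.Perm ℤ) (hw : IsSigned n w) (hw₁ : IsSigned n w₁)
    (hpos : ∀ j : ℤ, 1 ≤ j → j ≤ (k : ℤ) → 0 < w j)
    (hbar : w ((k : ℤ) + 1) = -a)
    (hw₁head : w₁ 1 = a)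
    (hw₁mid : ∀ j : ℤ, 1 ≤ j → j ≤ (k : ℤ) → w₁ (j + 1) = w j)
    (hw₁tail : ∀ j : ℤ, (k : ℤ) + 2 ≤ j → j ≤ (n : ℤ) → w₁ j = w j) :
    w = w₁ * wordProd (List.range (k + 1)) ∧
      lenB n w = lenB n w₁ + (k + 1) ∧
      ∀ l : List ℕ, IsReducedB n w₁ l → IsReducedB n w (l ++ List.range (k + 1)) := by
  have hcword : IsWordB (k+1) (List.range (k+1)) := fun i hi => by simpa using hi
  have hcsigned : IsSigned (k+1) (wordProd (List.range (k+1))) := wordProd_signed hcword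
  have hcle := (c_spec k).1
  have hctop := (c_spec k).2
  have hcfix : ∀ x : ℤ, (k:ℤ)+1 < x → wordProd (List.range (k+1)) x = x := by
    intro x hx
    exact hcsigned.2 x (by rw [abs_of_pos (by omega)]; push_cast; omega)
  have hw0 : w 0 = 0 := by have := hw.1 0; simp at this; omega
  have hw₁0 : w₁ 0 = 0 := by have := hw₁.1 0; simp at this; omega
  have hc0 : wordProd (List.range (k+1)) 0 = 0 := by
    have := hcsigned.1 0; simp at this; omega
  -- Part 1 : w = w₁ * c
  have hprod : w = w₁ * wordProd (List.range (k+1)) := by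
    have main : ∀ y : ℤ, 0 ≤ y → w y = w₁ (wordProd (List.range (k+1)) y) := by
      intro y hy
      rcases eq_or_lt_of_le hy with h0 | hypos
      · rw [← h0, hw0, hc0, hw₁0]
      · rcases le_or_gt y (k:ℤ) with h1 | h1
        · rw [hcle y hypos h1, hw₁mid y hypos h1]
        · by_cases he : y = (k:ℤ)+1
          · rw [he, hctop, hbar, hw₁.1 1, hw₁head]
          · have h2 : (k:ℤ)+2 ≤ y := by omega
            rw [hcfix y (by omega)]
            rcases le_or_gt y (n:ℤ) with h3 | h3
            · exact (hw₁tail y h2 h3).symm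
            · rw [hw.2 y (by rw [abs_of_pos (by omega)]; omega),
                hw₁.2 y (by rw [abs_of_pos (by omega)]; omega)]
    ext x
    simp only [Equiv.Perm.mul_apply]
    rcases le_or_gt 0 x with hx | hx
    · exact main x hx
    · have hneg : w x = -(w (-x)) := by
        have := hw.1 (-x); simp at this; rw [this]
      have h2 := main (-x) (by omega)
      have hcneg : wordProd (List.range (k+1)) x = -(wordProd (List.range (k+1)) (-x)) := by
        have := hcsigned.1 (-x); simp at this; rw [this]
      have hw₁neg : w₁ (wordProd (List.range (k+1)) x) =
          -(w₁ (wordProd (List.range (k+1)) (-x))) := by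
        rw [hcneg]; exact hw₁.1 _
      rw [hneg, h2, hw₁neg]
  -- Part 2 : length computation
  have hLB : ∀ t : ℕ, t ≤ k → LB n (w₁ * wordProd (List.range (t+1))) = LB n w₁ + (t+1) := by
    intro t
    induction t with
    | zero =>
        intro _
        rw [show List.range 1 = [0] from rfl, wordProd_singleton]
        exact LB_s0_pos hn (hw₁.1 1) (by rw [hw₁head]; exact ha)
    | succ t ih =>
        intro htk
        have hsplit : wordProd (List.range (t+1+1)) = wordProd (List.range (t+1)) * genB (t+1) := by
          rw [← wordProd_singleton, ← wordProd_append, ← List.range_succ]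
        rw [hsplit, ← mul_assoc]
        have e1 : (w₁ * wordProd (List.range (t+1))) ((t:ℤ)+1) = -a := by
          rw [Equiv.Perm.mul_apply, (c_spec t).2, hw₁.1 1, hw₁head]
        have e2 : (w₁ * wordProd (List.range (t+1))) ((t:ℤ)+2) = w ((t:ℤ)+1) := by
          rw [Equiv.Perm.mul_apply]
          have hfix2 : wordProd (List.range (t+1)) ((t:ℤ)+2) = (t:ℤ)+2 :=
            (wordProd_signed (n := t+1) (fun i hi => by simp at hi; omega)).2 _
              (by rw [abs_of_pos (by omega)]; push_cast; omega)
          rw [hfix2]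
          have e : (t:ℤ)+2 = ((t:ℤ)+1)+1 := by ring
          rw [e]
          exact hw₁mid _ (by omega) (by push_cast; omega)
        have hpos' : 0 < w ((t:ℤ)+1) := hpos _ (by omega) (by push_cast; omega)
        have hcond : (w₁ * wordProd (List.range (t+1))) ((t:ℤ)+1)
            < (w₁ * wordProd (List.range (t+1))) ((t:ℤ)+2) := by
          rw [e1, e2]; linarith
        have hstep := LB_sm_pos (n := n) (m := t) (by omega) hcond
        rw [hstep, ih (by omega)]
        omega
  have hLBk := hLB k le_rfl
  have hwc : IsWordB n (List.range (k+1)) := fun i hi => by simp at hi; omega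
  have hlen : lenB n w = lenB n w₁ + (k+1) := by
    rw [lenB_eq_LB hw, lenB_eq_LB hw₁, hprod, hLBk]
  refine ⟨hprod, hlen, ?_⟩
  rintro l ⟨hl1, hl2, hl3⟩
  refine ⟨?_, ?_, ?_⟩
  · intro i hi
    rcases List.mem_append.mp hi with h | h
    · exact hl1 i h
    · exact hwc i h
  · rw [wordProd_append, hl2, ← hprod]
  · rw [List.length_append, hl3, List.length_range, hlen]
end

section
/- Let n ≥ 3, let q ∈ ℂ with q ∉ {0, 1, −1}, let m ∈ ℤ, and set Q = i q^m (i the imaginary unit). Then the assignment T_j ↦ U_j + q for j = 1, …, n−1 and T_0 ↦ i(q − q^{−1}) U_0 + Q (equivalently, C_j ↦ U_j and C_0 ↦ i(q − q^{−1}) U_0) induces a well-defined isomorphism of ℂ-algebras TLB_{n,q,Q} → b_n(q, m). -/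
noncomputable section

/-- the free `ℂ`-algebra on generators indexed by `Fin n` -/
abbrev FreeB (n : ℕ) := FreeAlgebra ℂ (Fin n)

/-- the `i`-th generator -/
def XB {n : ℕ} (i : Fin n) : FreeB n := FreeAlgebra.ι ℂ i

/-- a scalar, viewed inside the free algebra -/
def cB {n : ℕ} (z : ℂ) : FreeB n := algebraMap ℂ (FreeB n) z

/-- The defining relations of `TLB_{n,q,Q} = H_n / J_n`: the type `B` Hecke algebra
relations on `T_0, …, T_{n-1}` together with the two relations generating `J_n`,
namely `C_1 C_2 C_1 = C_1` and `C_1 C_0 C_1 = [2]_{Q/q} C_1`, where `C_0 = T_0 - Q`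
and `C_i = T_i - q`. -/
inductive TLBRel (n : ℕ) (q Q : ℂ) : FreeB n → FreeB n → Prop
  | braidA (i j : Fin n) (hi : 1 ≤ (i : ℕ)) (hj : (j : ℕ) = (i : ℕ) + 1) :
      TLBRel n q Q (XB i * XB j * XB i) (XB j * XB i * XB j)
  | braidB (i j : Fin n) (hi : (i : ℕ) = 0) (hj : (j : ℕ) = 1) :
      TLBRel n q Q (XB i * XB j * XB i * XB j) (XB j * XB i * XB j * XB i)
  | comm (i j : Fin n) (h : (i : ℕ) + 1 < (j : ℕ)) :
      TLBRel n q Q (XB i * XB j) (XB j * XB i)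
  | quad (i : Fin n) (hi : 1 ≤ (i : ℕ)) :
      TLBRel n q Q ((XB i - cB q) * (XB i + cB q⁻¹)) 0
  | quad0 (i : Fin n) (hi : (i : ℕ) = 0) :
      TLBRel n q Q ((XB i - cB Q) * (XB i + cB Q⁻¹)) 0
  | blob1 (i j : Fin n) (hi : (i : ℕ) = 1) (hj : (j : ℕ) = 2) :
      TLBRel n q Q ((XB i - cB q) * (XB j - cB q) * (XB i - cB q)) (XB i - cB q)
  | blob0 (i z : Fin n) (hi : (i : ℕ) = 1) (hz : (z : ℕ) = 0) :
      TLBRel n q Q ((XB i - cB q) * (XB z - cB Q) * (XB i - cB q))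
        (cB (Q / q + q / Q) * (XB i - cB q))

/-- the Gaussian integer `[a] = (q^a - q^{-a})/(q - q^{-1})` -/
def gauss (q : ℂ) (a : ℤ) : ℂ := (q ^ a - q ^ (-a)) / (q - q⁻¹)

/-- The defining relations of the blob algebra `b_n(q, m)` on generators
`U_0, …, U_{n-1}`. -/
inductive BlobRel (n : ℕ) (q : ℂ) (m : ℤ) : FreeB n → FreeB n → Prop
  | upDown (i j : Fin n) (hi : 1 ≤ (i : ℕ)) (hj : (j : ℕ) = (i : ℕ) + 1) :
      BlobRel n q m (XB i * XB j * XB i) (XB i)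
  | downUp (i j : Fin n) (hi : 1 ≤ (i : ℕ)) (hj : (j : ℕ) = (i : ℕ) + 1) :
      BlobRel n q m (XB j * XB i * XB j) (XB j)
  | blob (i z : Fin n) (hi : (i : ℕ) = 1) (hz : (z : ℕ) = 0) :
      BlobRel n q m (XB i * XB z * XB i) (cB (gauss q (m - 1)) * XB i)
  | sq (i : Fin n) (hi : 1 ≤ (i : ℕ)) :
      BlobRel n q m (XB i * XB i) (cB (-gauss q 2) * XB i)
  | sq0 (i : Fin n) (hi : (i : ℕ) = 0) :
      BlobRel n q m (XB i * XB i) (cB (-gauss q m) * XB i)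
  | comm (i j : Fin n) (h : (i : ℕ) + 1 < (j : ℕ)) :
      BlobRel n q m (XB i * XB j) (XB j * XB i)

/-- `TLB_{n,q,Q} = H_n / J_n` -/
abbrev TLB (n : ℕ) (q Q : ℂ) := RingQuot (TLBRel n q Q)

/-- the blob algebra `b_n(q, m)` -/
abbrev Blob (n : ℕ) (q : ℂ) (m : ℤ) := RingQuot (BlobRel n q m)

namespace Statement10Aux

set_option linter.unreachableTactic false
set_option linter.unusedTactic false

section Generic

variable {R : Type*} [Ring R] [Algebra ℂ R]

lemma gcomm (x y : R) (h : x * y = y * x) (a b a' b' : ℂ) :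
    (a•x + b•(1:R)) * (a'•y + b'•1) = (a'•y + b'•1) * (a•x + b•1) := by
  simp only [mul_add, add_mul, smul_mul_assoc, mul_smul_comm, smul_smul, mul_one, one_mul]
  rw [h]
  match_scalars <;> ring

lemma gbraidA (x y : R) (s δ : ℂ) (hxyx : x*y*x = x) (hyxy : y*x*y = y)
    (hx2 : x*x = δ•x) (hy2 : y*y = δ•y) (hδ : 1 + s*δ + s^2 = 0) :
    (x + s•1) * (y + s•1) * (x + s•1) = (y + s•1) * (x + s•1) * (y + s•1) := by
  have hxyx' : x*(y*x) = x := by rw [← mul_assoc]; exact hxyx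
  have hyxy' : y*(x*y) = y := by rw [← mul_assoc]; exact hyxy
  simp only [mul_add, add_mul, smul_mul_assoc, mul_smul_comm, smul_smul, mul_one, one_mul,
    mul_assoc]
  rw [hxyx', hyxy', hx2, hy2]
  match_scalars <;> (first | ring1 | linear_combination -hδ | linear_combination hδ | linear_combination (-2:ℂ)*hδ | linear_combination (2:ℂ)*hδ)

lemma gbraidB (x y : R) (c Q s α δ g : ℂ)
    (hx2 : x*x = α•x) (hy2 : y*y = δ•y) (hyxy : y*x*y = g•y)
    (hcoef : c*c*g + c*c*s*α + c*Q*δ + 2*c*Q*s = 0) :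
    (c•x + Q•(1:R)) * (y + s•1) * (c•x + Q•1) * (y + s•1)
      = (y + s•1) * (c•x + Q•1) * (y + s•1) * (c•x + Q•1) := by
  have hyxy' : y*(x*y) = g•y := by rw [← mul_assoc]; exact hyxy
  have hxyxy : x*(y*(x*y)) = g•(x*y) := by rw [hyxy', mul_smul_comm]
  have hyxyx : y*(x*(y*x)) = g•(y*x) := by
    have : y*(x*(y*x)) = (y*(x*y))*x := by noncomm_ring
    rw [this, hyxy', smul_mul_assoc]
  have hxxy : x*(x*y) = α•(x*y) := by rw [← mul_assoc, hx2, smul_mul_assoc]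
  have hyxx : y*(x*x) = α•(y*x) := by rw [hx2, mul_smul_comm]
  have hxyy : x*(y*y) = δ•(x*y) := by rw [hy2, mul_smul_comm]
  have hyyx : y*(y*x) = δ•(y*x) := by rw [← mul_assoc, hy2, smul_mul_assoc]
  simp only [mul_add, add_mul, smul_mul_assoc, mul_smul_comm, smul_smul, mul_one, one_mul,
    mul_assoc]
  rw [hxyxy, hyxyx, hxxy, hyxx, hxyy, hyyx, hx2, hy2]
  match_scalars <;> (first | ring1 | linear_combination -hcoef | linear_combination hcoef | linear_combination (-2:ℂ)*hcoef | linear_combination (2:ℂ)*hcoef)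

lemma gquad (x : R) (c b e δ : ℂ) (hx2 : x*x = δ•x) (h : c*δ + (b + e) = 0) :
    ((c•x + b•(1:R)) - b•1) * ((c•x + b•1) + e•1) = 0 := by
  simp only [add_sub_cancel_right, mul_add, add_mul, smul_mul_assoc, mul_smul_comm, smul_smul,
    mul_one, one_mul, hx2]
  match_scalars
  linear_combination c * h

lemma gCsq (t : R) (s e : ℂ) (h : (t - s•1)*(t + e•1) = 0) :
    (t - s•(1:R))*(t - s•1) = (-(s+e))•(t - s•1) := by
  have expand : (t - s•(1:R))*(t - s•1) = (t - s•1)*(t + e•1) - (s+e)•(t - s•1) := by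
    simp only [mul_add, mul_sub, sub_mul, add_mul, smul_mul_assoc, mul_smul_comm, smul_smul,
      mul_one, one_mul, smul_add, smul_sub]
    module
  rw [expand, h, zero_sub, neg_smul]

lemma gsq_of_quad (t : R) (s e : ℂ) (h : (t - s•1)*(t + e•1) = 0) (hse : s*e = 1) :
    t*t = (s-e)•t + (1:R) := by
  have expand : (t - s•1)*(t + e•1) = t*t - (s-e)•t - (s*e)•(1:R) := by
    simp only [mul_add, mul_sub, sub_mul, add_mul, smul_mul_assoc, mul_smul_comm, smul_smul,
      mul_one, one_mul, smul_sub, sub_smul]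
    module
  rw [expand, hse, one_smul] at h
  rw [show t*t = (t*t - (s-e)•t - 1) + (s-e)•t + 1 by abel, h]
  abel

lemma gunit (t : R) (s e : ℂ) (h : (t - s•1)*(t + e•1) = 0) (hse : s*e = 1) : IsUnit t := by
  have h2 := gsq_of_quad t s e h hse
  have h1 : t * (t - (s-e)•1) = 1 := by
    rw [mul_sub, mul_smul_comm, mul_one, h2]; abel
  have h1' : (t - (s-e)•1) * t = 1 := by
    rw [sub_mul, smul_mul_assoc, one_mul, h2]; abel
  exact ⟨⟨t, t - (s-e)•1, h1, h1'⟩, rfl⟩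

lemma gsym (x y : R) (s e : ℂ) (hb : x*y*x = y*x*y)
    (hx2 : x*x = (s-e)•x + 1) (hy2 : y*y = (s-e)•y + 1) (hse : s*e = 1) :
    (x - s•1)*(y - s•1)*(x - s•1) - (x - s•1)
      = (y - s•1)*(x - s•1)*(y - s•1) - (y - s•1) := by
  have hb' : x*(y*x) = y*(x*y) := by rw [← mul_assoc, ← mul_assoc]; exact hb
  simp only [mul_sub, sub_mul, smul_mul_assoc, mul_smul_comm, smul_smul, mul_one, one_mul,
    mul_assoc]
  rw [hb', hx2, hy2]
  try simp only [smul_add, smul_smul]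
  match_scalars <;> (first | ring1 | linear_combination -hse | linear_combination hse | linear_combination (-2:ℂ)*hse | linear_combination (2:ℂ)*hse | linear_combination s*hse | linear_combination (-s)*hse)

lemma gshift (x y z : R) (s : ℂ)
    (hux : IsUnit x) (huy : IsUnit y) (huz : IsUnit z)
    (hbxy : x*y*x = y*x*y) (hbyz : y*z*y = z*y*z) (hcomm : x*z = z*x)
    (h : (x - s•1)*(y - s•1)*(x - s•1) = x - s•1) :
    (y - s•1)*(z - s•1)*(y - s•1) = y - s•1 := by
  set g : R := x*(y*z) with hg
  have hgu : IsUnit g := hux.mul (huy.mul huz)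
  have e1 : g * (x - s•1) = (y - s•1) * g := by
    have key : g*x = y*g := by
      calc x*(y*z)*x = x*(y*(z*x)) := by noncomm_ring
        _ = x*(y*(x*z)) := by rw [hcomm]
        _ = x*y*x*z := by noncomm_ring
        _ = y*x*y*z := by rw [hbxy]
        _ = y*(x*(y*z)) := by noncomm_ring
    simp only [mul_sub, sub_mul, mul_smul_comm, smul_mul_assoc, mul_one, one_mul, key]
  have e2 : g * (y - s•1) = (z - s•1) * g := by
    have key : g*y = z*g := by
      calc x*(y*z)*y = x*(y*(z*y)) := by noncomm_ring
        _ = x*(y*z*y) := by noncomm_ring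
        _ = x*(z*(y*z)) := by rw [hbyz]; noncomm_ring
        _ = (x*z)*(y*z) := by noncomm_ring
        _ = (z*x)*(y*z) := by rw [hcomm]
        _ = z*(x*(y*z)) := by noncomm_ring
    simp only [mul_sub, sub_mul, mul_smul_comm, smul_mul_assoc, mul_one, one_mul, key]
  have main : ((y - s•1)*(z - s•1)*(y - s•1)) * g = (y - s•1) * g := by
    calc (y - s•1)*(z - s•1)*(y - s•1) * g
        = (y - s•1)*(z - s•1)*((y - s•1) * g) := by rw [mul_assoc]
      _ = (y - s•1)*(z - s•1)*(g * (x - s•1)) := by rw [e1]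
      _ = (y - s•1)*(((z - s•1)*g) * (x - s•1)) := by simp only [mul_assoc]
      _ = (y - s•1)*((g*(y - s•1)) * (x - s•1)) := by rw [e2]
      _ = ((y - s•1)*g) * ((y - s•1) * (x - s•1)) := by simp only [mul_assoc]
      _ = (g*(x - s•1)) * ((y - s•1) * (x - s•1)) := by rw [e1]
      _ = g * ((x - s•1)*(y - s•1)*(x - s•1)) := by
            rw [mul_assoc g, ← mul_assoc (x - s•1)]
      _ = g * (x - s•1) := by rw [h]
      _ = (y - s•1) * g := e1
  exact hgu.mul_right_cancel main

end Generic

section Scalars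

variable {q : ℂ} {m : ℤ} {Q : ℂ}

lemma hqq (hq0 : q ≠ 0) (hq1 : q ≠ 1) (hqm1 : q ≠ -1) : q - q⁻¹ ≠ 0 := by
  intro h
  have h2 : q*q - 1 = 0 := by field_simp at h; linear_combination h
  have h3 : (q-1)*(q+1) = 0 := by linear_combination h2
  rcases mul_eq_zero.mp h3 with h'|h'
  · exact hq1 (by linear_combination h')
  · exact hqm1 (by linear_combination h')

lemma hc0 (hq0 : q ≠ 0) (hq1 : q ≠ 1) (hqm1 : q ≠ -1) : Complex.I * (q - q⁻¹) ≠ 0 :=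
  mul_ne_zero Complex.I_ne_zero (hqq hq0 hq1 hqm1)

lemma hQ0' (hq0 : q ≠ 0) (hQ : Q = Complex.I * q ^ m) : Q ≠ 0 := by
  rw [hQ]; exact mul_ne_zero Complex.I_ne_zero (zpow_ne_zero _ hq0)

lemma ckey (hq0 : q ≠ 0) (hq1 : q ≠ 1) (hqm1 : q ≠ -1) (a : ℤ) :
    Complex.I * (q - q⁻¹) * gauss q a = Complex.I * (q ^ a - q ^ (-a)) := by
  rw [gauss, mul_assoc, mul_div_cancel₀ _ (hqq hq0 hq1 hqm1)]

lemma g2eq (hq0 : q ≠ 0) (hq1 : q ≠ 1) (hqm1 : q ≠ -1) : gauss q 2 = q + q⁻¹ := by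
  have h := hqq hq0 hq1 hqm1
  rw [gauss, div_eq_iff h]
  rw [show ((2:ℤ)) = ((2:ℕ):ℤ) by norm_num, zpow_neg, zpow_natCast]
  field_simp
  ring

lemma s5 (hq0 : q ≠ 0) (hq1 : q ≠ 1) (hqm1 : q ≠ -1) (hQ : Q = Complex.I * q ^ m) :
    Q + Q⁻¹ = Complex.I * (q - q⁻¹) * gauss q m := by
  rw [ckey hq0 hq1 hqm1, hQ, mul_inv, Complex.inv_I, zpow_neg]
  ring

lemma s6 (hq0 : q ≠ 0) (hq1 : q ≠ 1) (hqm1 : q ≠ -1) (hQ : Q = Complex.I * q ^ m) :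
    Q/q + q/Q = Complex.I * (q - q⁻¹) * gauss q (m-1) := by
  have hm1 : q ^ (m-1) = q ^ m * q⁻¹ := by
    rw [zpow_sub₀ hq0, zpow_one]; rfl
  have hm1' : q ^ (-(m-1)) = (q ^ m)⁻¹ * q := by
    rw [neg_sub, zpow_sub₀ hq0, zpow_one]
    rw [div_eq_mul_inv, mul_comm]
  rw [ckey hq0 hq1 hqm1, hm1, hm1', hQ, div_eq_mul_inv, div_eq_mul_inv, mul_inv, Complex.inv_I]
  ring

lemma s7 (hq0 : q ≠ 0) (hq1 : q ≠ 1) (hqm1 : q ≠ -1) (hQ : Q = Complex.I * q ^ m) :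
    (Complex.I * (q - q⁻¹)) * (Complex.I * (q - q⁻¹)) * gauss q (m-1)
      + (Complex.I * (q - q⁻¹)) * (Complex.I * (q - q⁻¹)) * q * (-gauss q m)
      + (Complex.I * (q - q⁻¹)) * Q * (-gauss q 2) + 2 * (Complex.I * (q - q⁻¹)) * Q * q = 0 := by
  have h4 := g2eq hq0 hq1 hqm1
  have h5 := s5 hq0 hq1 hqm1 hQ
  have h6 := s6 hq0 hq1 hqm1 hQ
  set c := Complex.I * (q - q⁻¹)
  linear_combination (-c)*h6 + c*q*h5 - c*Q*h4

end Scalars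

end Statement10Aux
namespace Statement10Aux

section Algebras

variable {n : ℕ} {q : ℂ} {m : ℤ} {Q : ℂ}

/-- the generators of the blob algebra -/
noncomputable def uB (n : ℕ) (q : ℂ) (m : ℤ) (i : Fin n) : Blob n q m :=
  RingQuot.mkAlgHom ℂ (BlobRel n q m) (XB i)

/-- the generators of `TLB` -/
noncomputable def tA (n : ℕ) (q Q : ℂ) (i : Fin n) : TLB n q Q :=
  RingQuot.mkAlgHom ℂ (TLBRel n q Q) (XB i)

lemma u_ud {i j : Fin n} (hi : 1 ≤ (i:ℕ)) (hj : (j:ℕ) = (i:ℕ)+1) :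
    uB n q m i * uB n q m j * uB n q m i = uB n q m i := by
  simpa only [uB, map_mul] using RingQuot.mkAlgHom_rel ℂ (BlobRel.upDown i j hi hj)

lemma u_du {i j : Fin n} (hi : 1 ≤ (i:ℕ)) (hj : (j:ℕ) = (i:ℕ)+1) :
    uB n q m j * uB n q m i * uB n q m j = uB n q m j := by
  simpa only [uB, map_mul] using RingQuot.mkAlgHom_rel ℂ (BlobRel.downUp i j hi hj)

lemma u_blob {i z : Fin n} (hi : (i:ℕ) = 1) (hz : (z:ℕ) = 0) :
    uB n q m i * uB n q m z * uB n q m i = gauss q (m-1) • uB n q m i := by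
  simpa only [uB, map_mul, map_smul, cB, AlgHom.commutes, ← Algebra.smul_def] using
    RingQuot.mkAlgHom_rel ℂ (BlobRel.blob i z hi hz)

lemma u_sq {i : Fin n} (hi : 1 ≤ (i:ℕ)) :
    uB n q m i * uB n q m i = (-gauss q 2) • uB n q m i := by
  simpa only [uB, map_mul, map_smul, cB, AlgHom.commutes, ← Algebra.smul_def] using
    RingQuot.mkAlgHom_rel ℂ (BlobRel.sq i hi)

lemma u_sq0 {i : Fin n} (hi : (i:ℕ) = 0) :
    uB n q m i * uB n q m i = (-gauss q m) • uB n q m i := by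
  simpa only [uB, map_mul, map_smul, cB, AlgHom.commutes, ← Algebra.smul_def] using
    RingQuot.mkAlgHom_rel ℂ (BlobRel.sq0 i hi)

lemma u_comm {i j : Fin n} (h : (i:ℕ)+1 < (j:ℕ)) :
    uB n q m i * uB n q m j = uB n q m j * uB n q m i := by
  simpa only [uB, map_mul] using RingQuot.mkAlgHom_rel ℂ (BlobRel.comm i j h)

lemma t_braid {i j : Fin n} (hi : 1 ≤ (i:ℕ)) (hj : (j:ℕ) = (i:ℕ)+1) :
    tA n q Q i * tA n q Q j * tA n q Q i = tA n q Q j * tA n q Q i * tA n q Q j := by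
  simpa only [tA, map_mul] using RingQuot.mkAlgHom_rel ℂ (TLBRel.braidA i j hi hj)

lemma t_comm {i j : Fin n} (h : (i:ℕ)+1 < (j:ℕ)) :
    tA n q Q i * tA n q Q j = tA n q Q j * tA n q Q i := by
  simpa only [tA, map_mul] using RingQuot.mkAlgHom_rel ℂ (TLBRel.comm i j h)

lemma t_quad {i : Fin n} (hi : 1 ≤ (i:ℕ)) :
    (tA n q Q i - q•1) * (tA n q Q i + q⁻¹•1) = 0 := by
  simpa only [tA, map_mul, map_sub, map_add, map_zero, map_smul, map_one, cB, AlgHom.commutes,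
    Algebra.algebraMap_eq_smul_one] using RingQuot.mkAlgHom_rel ℂ (TLBRel.quad i hi)

lemma t_quad0 {i : Fin n} (hi : (i:ℕ) = 0) :
    (tA n q Q i - Q•1) * (tA n q Q i + Q⁻¹•1) = 0 := by
  simpa only [tA, map_mul, map_sub, map_add, map_zero, map_smul, map_one, cB, AlgHom.commutes,
    Algebra.algebraMap_eq_smul_one] using RingQuot.mkAlgHom_rel ℂ (TLBRel.quad0 i hi)

lemma t_blob1 {i j : Fin n} (hi : (i:ℕ) = 1) (hj : (j:ℕ) = 2) :
    (tA n q Q i - q•1) * (tA n q Q j - q•1) * (tA n q Q i - q•1) = tA n q Q i - q•1 := by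
  simpa only [tA, map_mul, map_sub, map_smul, map_one, cB, AlgHom.commutes,
    Algebra.algebraMap_eq_smul_one] using RingQuot.mkAlgHom_rel ℂ (TLBRel.blob1 i j hi hj)

lemma t_blob0 {i z : Fin n} (hi : (i:ℕ) = 1) (hz : (z:ℕ) = 0) :
    (tA n q Q i - q•1) * (tA n q Q z - Q•1) * (tA n q Q i - q•1)
      = (Q/q + q/Q) • (tA n q Q i - q•1) := by
  simpa only [tA, map_mul, map_sub, map_smul, map_one, cB, AlgHom.commutes, Algebra.algebraMap_eq_smul_one,
    smul_mul_assoc, one_mul] using RingQuot.mkAlgHom_rel ℂ (TLBRel.blob0 i z hi hz)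

lemma t_unit (hq0 : q ≠ 0) {i : Fin n} (hi : 1 ≤ (i:ℕ)) : IsUnit (tA n q Q i) :=
  gunit _ q q⁻¹ (t_quad hi) (mul_inv_cancel₀ hq0)

lemma t_sq (hq0 : q ≠ 0) {i : Fin n} (hi : 1 ≤ (i:ℕ)) :
    tA n q Q i * tA n q Q i = (q - q⁻¹) • tA n q Q i + 1 :=
  gsq_of_quad _ q q⁻¹ (t_quad hi) (mul_inv_cancel₀ hq0)

lemma t_ud (hq0 : q ≠ 0) : ∀ k : ℕ, 1 ≤ k → ∀ (hk2 : k+1 < n) (hk1 : k < n),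
    (tA n q Q ⟨k,hk1⟩ - q•1) * (tA n q Q ⟨k+1,hk2⟩ - q•1) * (tA n q Q ⟨k,hk1⟩ - q•1)
      = tA n q Q ⟨k,hk1⟩ - q•1 := by
  intro k hk
  induction k, hk using Nat.le_induction with
  | base =>
      intro hk2 hk1
      exact t_blob1 rfl rfl
  | succ k hk ih =>
      intro hk2 hk1
      have hk0 : k < n := by omega
      have hk1' : k+1 < n := hk1
      exact gshift (tA n q Q ⟨k, hk0⟩) (tA n q Q ⟨k+1, hk1⟩) (tA n q Q ⟨k+2, hk2⟩) q
        (t_unit hq0 (by simpa using hk)) (t_unit hq0 (by simp)) (t_unit hq0 (by simp))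
        (t_braid (by simpa using hk) rfl) (t_braid (by simp) rfl)
        (t_comm (by simp)) (ih hk1 hk0)

end Algebras

end Statement10Aux
namespace Statement10Aux

section Maps

variable {n : ℕ} {q : ℂ} {m : ℤ} {Q : ℂ}

/-- the algebra map `FreeB n → Blob` realizing `T_j ↦ U_j + q`, `T_0 ↦ i(q-q⁻¹)U_0 + Q` -/
noncomputable def Fmap (n : ℕ) (q : ℂ) (m : ℤ) (Q : ℂ) : FreeB n →ₐ[ℂ] Blob n q m :=
  FreeAlgebra.lift ℂ (fun i =>
    if (i:ℕ) = 0 then (Complex.I*(q-q⁻¹)) • uB n q m i + Q•1 else uB n q m i + q•1)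

lemma Fmap_X {i : Fin n} :
    Fmap n q m Q (XB i)
      = if (i:ℕ) = 0 then (Complex.I*(q-q⁻¹)) • uB n q m i + Q•1 else uB n q m i + q•1 := by
  simp [Fmap, XB, FreeAlgebra.lift_ι_apply]

lemma Fmap_X0 {i : Fin n} (hi : (i:ℕ) = 0) :
    Fmap n q m Q (XB i) = (Complex.I*(q-q⁻¹)) • uB n q m i + Q•1 := by
  rw [Fmap_X, if_pos hi]

lemma Fmap_Xpos {i : Fin n} (hi : (i:ℕ) ≠ 0) :
    Fmap n q m Q (XB i) = uB n q m i + q•1 := by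
  rw [Fmap_X, if_neg hi]

/-- the algebra map `FreeB n → TLB` realizing `U_j ↦ T_j - q`, `U_0 ↦ (i(q-q⁻¹))⁻¹(T_0 - Q)` -/
noncomputable def Gmap (n : ℕ) (q : ℂ) (m : ℤ) (Q : ℂ) : FreeB n →ₐ[ℂ] TLB n q Q :=
  FreeAlgebra.lift ℂ (fun i =>
    if (i:ℕ) = 0 then (Complex.I*(q-q⁻¹))⁻¹ • (tA n q Q i - Q•1) else tA n q Q i - q•1)

lemma Gmap_X {i : Fin n} :
    Gmap n q m Q (XB i)
      = if (i:ℕ) = 0 then (Complex.I*(q-q⁻¹))⁻¹ • (tA n q Q i - Q•1) else tA n q Q i - q•1 := by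
  simp [Gmap, XB, FreeAlgebra.lift_ι_apply]

lemma Gmap_X0 {i : Fin n} (hi : (i:ℕ) = 0) :
    Gmap n q m Q (XB i) = (Complex.I*(q-q⁻¹))⁻¹ • (tA n q Q i - Q•1) := by
  rw [Gmap_X, if_pos hi]

lemma Gmap_Xpos {i : Fin n} (hi : (i:ℕ) ≠ 0) :
    Gmap n q m Q (XB i) = tA n q Q i - q•1 := by
  rw [Gmap_X, if_neg hi]

lemma Fmap_rel (hq0 : q ≠ 0) (hq1 : q ≠ 1) (hqm1 : q ≠ -1) (hQ : Q = Complex.I * q ^ m) :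
    ∀ ⦃x y⦄, TLBRel n q Q x y → Fmap n q m Q x = Fmap n q m Q y := by
  have hg2 := g2eq hq0 hq1 hqm1
  have h5 := s5 hq0 hq1 hqm1 hQ (m := m)
  have h6 := s6 hq0 hq1 hqm1 hQ (m := m)
  have h7 := s7 hq0 hq1 hqm1 hQ (m := m)
  have hqi : q*q⁻¹ = 1 := mul_inv_cancel₀ hq0
  intro x y h
  induction h with
  | braidA i j hi hj =>
      simp only [map_mul]
      rw [Fmap_Xpos (i:=i) (by omega), Fmap_Xpos (i:=j) (by omega)]
      exact gbraidA _ _ q (-gauss q 2) (u_ud hi hj) (u_du hi hj) (u_sq hi) (u_sq (by omega))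
        (by linear_combination (-q)*hg2 - hqi)
  | braidB i j hi hj =>
      simp only [map_mul]
      rw [Fmap_X0 hi, Fmap_Xpos (i:=j) (by omega)]
      exact gbraidB _ _ _ Q q (-gauss q m) (-gauss q 2) (gauss q (m-1))
        (u_sq0 hi) (u_sq (by omega)) (u_blob hj hi) h7
  | comm i j hij =>
      simp only [map_mul]
      by_cases hi0 : (i:ℕ) = 0
      · rw [Fmap_X0 hi0, Fmap_Xpos (i:=j) (by omega)]
        simpa only [one_smul] using gcomm (uB n q m i) (uB n q m j) (u_comm hij)
          (Complex.I*(q-q⁻¹)) Q 1 q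
      · rw [Fmap_Xpos (i:=i) hi0, Fmap_Xpos (i:=j) (by omega)]
        simpa only [one_smul] using gcomm (uB n q m i) (uB n q m j) (u_comm hij) 1 q 1 q
  | quad i hi =>
      simp only [map_mul, map_sub, map_add, map_zero, map_smul, map_one, cB, AlgHom.commutes,
        Algebra.algebraMap_eq_smul_one]
      rw [Fmap_Xpos (i:=i) (by omega)]
      simpa only [one_smul] using gquad (uB n q m i) 1 q q⁻¹ (-gauss q 2) (u_sq hi)
        (by linear_combination -hg2)
  | quad0 i hi =>
      simp only [map_mul, map_sub, map_add, map_zero, map_smul, map_one, cB, AlgHom.commutes,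
        Algebra.algebraMap_eq_smul_one]
      rw [Fmap_X0 hi]
      exact gquad (uB n q m i) _ Q Q⁻¹ (-gauss q m) (u_sq0 hi) (by linear_combination h5)
  | blob1 i j hi hj =>
      simp only [map_mul, map_sub, map_smul, map_one, cB, AlgHom.commutes, Algebra.algebraMap_eq_smul_one]
      rw [Fmap_Xpos (i:=i) (by omega), Fmap_Xpos (i:=j) (by omega)]
      simp only [add_sub_cancel_right]
      exact u_ud (by omega) (by omega)
  | blob0 i z hi hz =>
      simp only [map_mul, map_sub, map_smul, map_one, cB, AlgHom.commutes, Algebra.algebraMap_eq_smul_one,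
        smul_mul_assoc, one_mul]
      rw [Fmap_Xpos (i:=i) (by omega), Fmap_X0 hz]
      simp only [add_sub_cancel_right]
      rw [mul_smul_comm, smul_mul_assoc, u_blob hi hz, smul_smul, h6]

lemma Gmap_rel (hq0 : q ≠ 0) (hq1 : q ≠ 1) (hqm1 : q ≠ -1) (hQ : Q = Complex.I * q ^ m) :
    ∀ ⦃x y⦄, BlobRel n q m x y → Gmap n q m Q x = Gmap n q m Q y := by
  have hg2 := g2eq hq0 hq1 hqm1
  have h5 := s5 hq0 hq1 hqm1 hQ (m := m)
  have h6 := s6 hq0 hq1 hqm1 hQ (m := m)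
  have hqi : q*q⁻¹ = 1 := mul_inv_cancel₀ hq0
  have hc : Complex.I*(q-q⁻¹) ≠ 0 := hc0 hq0 hq1 hqm1
  have hQ0 : Q ≠ 0 := hQ0' hq0 hQ
  intro x y h
  induction h with
  | upDown i j hi hj =>
      simp only [map_mul]
      rw [Gmap_Xpos (i:=i) (by omega), Gmap_Xpos (i:=j) (by omega)]
      rcases i with ⟨iv, hlt⟩
      rcases j with ⟨jv, hlt'⟩
      obtain rfl : jv = iv + 1 := hj
      exact t_ud hq0 iv hi hlt' hlt
  | downUp i j hi hj =>
      simp only [map_mul]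
      rw [Gmap_Xpos (i:=i) (by omega), Gmap_Xpos (i:=j) (by omega)]
      rcases i with ⟨iv, hlt⟩
      rcases j with ⟨jv, hlt'⟩
      obtain rfl : jv = iv + 1 := hj
      have h1 := t_ud (Q := Q) hq0 iv hi hlt' hlt
      have h2 := gsym (tA n q Q ⟨iv,hlt⟩) (tA n q Q ⟨iv+1,hlt'⟩) q q⁻¹
        (t_braid hi rfl) (t_sq hq0 hi) (t_sq hq0 (by exact Nat.le_add_left 1 iv)) hqi
      rw [h1, sub_self] at h2
      exact sub_eq_zero.mp h2.symm
  | blob i z hi hz =>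
      simp only [map_mul, map_smul, map_one, cB, AlgHom.commutes, Algebra.algebraMap_eq_smul_one,
        smul_mul_assoc, one_mul]
      rw [Gmap_Xpos (i:=i) (by omega), Gmap_X0 hz]
      rw [mul_smul_comm, smul_mul_assoc, t_blob0 hi hz, smul_smul, h6,
        inv_mul_cancel_left₀ hc]
  | sq i hi =>
      simp only [map_mul, map_smul, map_one, cB, AlgHom.commutes, Algebra.algebraMap_eq_smul_one,
        smul_mul_assoc, one_mul]
      rw [Gmap_Xpos (i:=i) (by omega)]
      rw [gCsq _ q q⁻¹ (t_quad hi)]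
      rw [show -gauss q 2 = -(q+q⁻¹) by rw [hg2]]
  | sq0 i hi =>
      simp only [map_mul, map_smul, map_one, cB, AlgHom.commutes, Algebra.algebraMap_eq_smul_one,
        smul_mul_assoc, one_mul]
      rw [Gmap_X0 hi]
      have e1 : ((Complex.I*(q-q⁻¹))⁻¹•(tA n q Q i - Q•1))*((Complex.I*(q-q⁻¹))⁻¹•(tA n q Q i - Q•1))
          = ((Complex.I*(q-q⁻¹))⁻¹*(Complex.I*(q-q⁻¹))⁻¹)•((tA n q Q i - Q•1)*(tA n q Q i - Q•1)) := by
        rw [smul_mul_assoc, mul_smul_comm, smul_smul]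
      rw [e1, gCsq _ Q Q⁻¹ (t_quad0 hi), smul_smul, smul_smul]
      congr 1
      rw [h5]
      set cI := Complex.I*(q-q⁻¹) with hcI
      field_simp
      try ring
  | comm i j hij =>
      simp only [map_mul]
      by_cases hi0 : (i:ℕ) = 0
      · rw [Gmap_X0 hi0, Gmap_Xpos (i:=j) (by omega)]
        have e0 : (Complex.I*(q-q⁻¹))⁻¹•(tA n q Q i - Q•1)
            = (Complex.I*(q-q⁻¹))⁻¹•tA n q Q i + (-((Complex.I*(q-q⁻¹))⁻¹*Q))•(1:TLB n q Q) := by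
          module
        have e1 : tA n q Q j - q•1 = (1:ℂ)•tA n q Q j + (-q)•(1:TLB n q Q) := by module
        rw [e0, e1]
        exact gcomm _ _ (t_comm hij) _ _ _ _
      · rw [Gmap_Xpos (i:=i) hi0, Gmap_Xpos (i:=j) (by omega)]
        have e1 : ∀ z : Fin n, tA n q Q z - q•1 = (1:ℂ)•tA n q Q z + (-q)•(1:TLB n q Q) :=
          fun z => by module
        rw [e1, e1]
        exact gcomm _ _ (t_comm hij) _ _ _ _

end Maps

end Statement10Aux

/-- For `n ≥ 3`, `q ∉ {0, 1, -1}`, `m ∈ ℤ` and `Q = i q^m`, the assignment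
`T_j ↦ U_j + q` for `j = 1, …, n-1` and `T_0 ↦ i (q - q⁻¹) U_0 + Q` (equivalently
`C_j ↦ U_j` and `C_0 ↦ i (q - q⁻¹) U_0`) induces a well-defined isomorphism of
`ℂ`-algebras `TLB_{n,q,Q} → b_n(q, m)`. -/
theorem statement10 (n : ℕ) (hn : 3 ≤ n) (q : ℂ) (hq0 : q ≠ 0) (hq1 : q ≠ 1)
    (hqm1 : q ≠ -1) (m : ℤ) (Q : ℂ) (hQ : Q = Complex.I * q ^ m) :
    ∃ φ : TLB n q Q ≃ₐ[ℂ] Blob n q m,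
      ∀ i : Fin n,
        (1 ≤ (i : ℕ) →
          φ (RingQuot.mkAlgHom ℂ (TLBRel n q Q) (XB i)) =
            RingQuot.mkAlgHom ℂ (BlobRel n q m) (XB i + cB q)) ∧
        ((i : ℕ) = 0 →
          φ (RingQuot.mkAlgHom ℂ (TLBRel n q Q) (XB i)) =
            RingQuot.mkAlgHom ℂ (BlobRel n q m)
              (cB (Complex.I * (q - q⁻¹)) * XB i + cB Q)) := by
  classical
  open Statement10Aux in
  have hc : Complex.I*(q-q⁻¹) ≠ 0 := Statement10Aux.hc0 hq0 hq1 hqm1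
  let F' : TLB n q Q →ₐ[ℂ] Blob n q m :=
    RingQuot.liftAlgHom ℂ ⟨Statement10Aux.Fmap n q m Q, Statement10Aux.Fmap_rel hq0 hq1 hqm1 hQ⟩
  let G' : Blob n q m →ₐ[ℂ] TLB n q Q :=
    RingQuot.liftAlgHom ℂ ⟨Statement10Aux.Gmap n q m Q, Statement10Aux.Gmap_rel hq0 hq1 hqm1 hQ⟩
  have hF'mk : ∀ x, F' (RingQuot.mkAlgHom ℂ (TLBRel n q Q) x) = Statement10Aux.Fmap n q m Q x :=
    fun x => RingQuot.liftAlgHom_mkAlgHom_apply _ _ _ _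
  have hG'mk : ∀ x, G' (RingQuot.mkAlgHom ℂ (BlobRel n q m) x) = Statement10Aux.Gmap n q m Q x :=
    fun x => RingQuot.liftAlgHom_mkAlgHom_apply _ _ _ _
  have hFG : F'.comp G' = AlgHom.id ℂ (Blob n q m) := by
    apply RingQuot.ringQuot_ext'
    apply FreeAlgebra.hom_ext
    funext i
    show F' (G' (RingQuot.mkAlgHom ℂ (BlobRel n q m) (XB i)))
        = RingQuot.mkAlgHom ℂ (BlobRel n q m) (XB i)
    rw [hG'mk]
    by_cases hi0 : (i:ℕ) = 0
    · rw [Statement10Aux.Gmap_X0 hi0]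
      simp only [Statement10Aux.tA, map_smul, map_sub, map_one, hF'mk]
      rw [Statement10Aux.Fmap_X0 hi0]
      rw [add_sub_cancel_right, smul_smul, inv_mul_cancel₀ hc, one_smul]
      rfl
    · rw [Statement10Aux.Gmap_Xpos hi0]
      simp only [Statement10Aux.tA, map_smul, map_sub, map_one, hF'mk]
      rw [Statement10Aux.Fmap_Xpos hi0]
      rw [add_sub_cancel_right]
      rfl
  have hGF : G'.comp F' = AlgHom.id ℂ (TLB n q Q) := by
    apply RingQuot.ringQuot_ext'
    apply FreeAlgebra.hom_ext
    funext i
    show G' (F' (RingQuot.mkAlgHom ℂ (TLBRel n q Q) (XB i)))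
        = RingQuot.mkAlgHom ℂ (TLBRel n q Q) (XB i)
    rw [hF'mk]
    by_cases hi0 : (i:ℕ) = 0
    · rw [Statement10Aux.Fmap_X0 hi0]
      simp only [Statement10Aux.uB, map_smul, map_add, map_one, hG'mk]
      rw [Statement10Aux.Gmap_X0 hi0]
      rw [smul_smul, mul_inv_cancel₀ hc, one_smul, sub_add_cancel]
      rfl
    · rw [Statement10Aux.Fmap_Xpos hi0]
      simp only [Statement10Aux.uB, map_smul, map_add, map_one, hG'mk]
      rw [Statement10Aux.Gmap_Xpos hi0]
      rw [sub_add_cancel]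
      rfl
  refine ⟨AlgEquiv.ofAlgHom F' G' hFG hGF, fun i => ⟨fun hi => ?_, fun hi0 => ?_⟩⟩
  · show F' (RingQuot.mkAlgHom ℂ (TLBRel n q Q) (XB i)) = _
    rw [hF'mk, Statement10Aux.Fmap_Xpos (by omega)]
    simp only [map_add, map_smul, map_one, cB, AlgHom.commutes, Algebra.algebraMap_eq_smul_one,
      Statement10Aux.uB]
  · show F' (RingQuot.mkAlgHom ℂ (TLBRel n q Q) (XB i)) = _
    rw [hF'mk, Statement10Aux.Fmap_X0 hi0]
    simp only [map_add, map_mul, map_smul, map_one, cB, AlgHom.commutes,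
      Algebra.algebraMap_eq_smul_one, smul_mul_assoc, one_mul, smul_smul,
      Statement10Aux.uB]

end
end

section
/- With the operators T_0, T_1, …, T_{n−1} on V^{⊗n} defined as in the context (n ≥ 3), the endomorphisms (T_1 − q)(T_2 − q)(T_1 − q) − (T_1 − q) and (T_1 − q)(T_0 − Q)(T_1 − q) − [2]_{Q/q}(T_1 − q) of V^{⊗n} are both zero; that is, the generators of the ideal J_n of the type B Hecke algebra annihilate the tensor space V^{⊗n}. -/
noncomputable section

/-- The tensor space `V^{⊗n}` for `V = ℂv_1 ⊕ ℂv_2`, realized with basis indexed by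
sequences `s : Fin n → Fin 2` (the value `0` encoding `v_1` and `1` encoding `v_2`). -/
abbrev TS (n : ℕ) := (Fin n → Fin 2) →₀ ℂ

/-- the basis vector `v_{s 1} ⊗ ⋯ ⊗ v_{s n}` -/
def bas {n : ℕ} (s : Fin n → Fin 2) : TS n := Finsupp.single s 1

/-- the operator determined by its values on basis vectors -/
def mkOp {n : ℕ} (f : (Fin n → Fin 2) → TS n) : Module.End ℂ (TS n) :=
  Finsupp.lift (TS n) ℂ (Fin n → Fin 2) f

/-- the sequence obtained from `s` by interchanging the entries at positions `i`, `j` -/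
def swapAt {n : ℕ} (s : Fin n → Fin 2) (i j : Fin n) : Fin n → Fin 2 :=
  Function.update (Function.update s i (s j)) j (s i)

/-- `T_k = Id^{⊗(k-1)} ⊗ R ⊗ Id^{⊗(n-k-1)}`, for `1 ≤ k ≤ n-1`, where
`R(v_j ⊗ v_j) = q v_j ⊗ v_j`, `R(v_2 ⊗ v_1) = v_1 ⊗ v_2`, and
`R(v_1 ⊗ v_2) = v_2 ⊗ v_1 + (q - q⁻¹) v_1 ⊗ v_2`. -/
def Tk (n : ℕ) [NeZero n] (q : ℂ) (k : ℕ) : Module.End ℂ (TS n) :=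
  mkOp fun s =>
    let i : Fin n := Fin.ofNat n (k - 1 : ℕ)
    let j : Fin n := Fin.ofNat n (k : ℕ)
    if s i = s j then q • bas s
    else if s i = 1 then bas (swapAt s i j)
    else bas (swapAt s i j) + (q - q⁻¹) • bas s

/-- `T_k⁻¹ = T_k - (q - q⁻¹)·Id` -/
def TopInv (n : ℕ) [NeZero n] (q : ℂ) (k : ℕ) : Module.End ℂ (TS n) :=
  Tk n q k - (q - q⁻¹) • 1

/-- `S_k`, for `1 ≤ k ≤ n-1`: multiplies a basis vector by `q` if its `k`-th and
`(k+1)`-st factors agree, and interchanges them otherwise. -/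
def Sop (n : ℕ) [NeZero n] (q : ℂ) (k : ℕ) : Module.End ℂ (TS n) :=
  mkOp fun s =>
    let i : Fin n := Fin.ofNat n (k - 1 : ℕ)
    let j : Fin n := Fin.ofNat n (k : ℕ)
    if s i = s j then q • bas s else bas (swapAt s i j)

/-- `ϖ`: multiplies a basis vector by `Q` if its first factor is `v_1`
and by `-Q⁻¹` if it is `v_2`. -/
def piOp (n : ℕ) [NeZero n] (Q : ℂ) : Module.End ℂ (TS n) :=
  mkOp fun s => if s 0 = 0 then Q • bas s else (-Q⁻¹) • bas s

/-- `T_0 := T_1⁻¹ T_2⁻¹ ⋯ T_{n-1}⁻¹ S_{n-1} S_{n-2} ⋯ S_1 ϖ` (with `ϖ` applied first) -/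
def Tzero (n : ℕ) [NeZero n] (q Q : ℂ) : Module.End ℂ (TS n) :=
  ((List.range (n - 1)).map fun k => TopInv n q (k + 1)).prod *
    (((List.range (n - 1)).map fun k => Sop n q (k + 1)).reverse).prod * piOp n Q

set_option linter.unusedSectionVars false
open Fin.NatCast
section Helpers
variable {n : ℕ} [NeZero n]

lemma mkOp_bas (f : (Fin n → Fin 2) → TS n) (s : Fin n → Fin 2) :
    mkOp f (bas s) = f s := by
  simp [mkOp, bas, Finsupp.lift_apply, Finsupp.sum_single_index]

lemma endo_ext {F G : Module.End ℂ (TS n)} (h : ∀ s, F (bas s) = G (bas s)) : F = G := by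
  refine Finsupp.lhom_ext (fun a b => ?_)
  rw [← Finsupp.smul_single_one, map_smul, map_smul]
  show b • F (bas a) = b • G (bas a)
  rw [h]

lemma swapAt_apply (s : Fin n → Fin 2) (i j x : Fin n) :
    swapAt s i j x = if x = j then s i else if x = i then s j else s x := by
  simp [swapAt, Function.update_apply]

lemma fin_val_cast {a : ℕ} (ha : a < n) : (((a : ℕ) : Fin n) : ℕ) = a := Fin.val_cast_of_lt ha

lemma fin_eq_cast_iff {k : ℕ} (hk : k < n) (x : Fin n) :
    (x = ((k : ℕ) : Fin n)) ↔ (x : ℕ) = k := by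
  rw [Fin.ext_iff, fin_val_cast hk]

lemma cast_eq_cast_iff {a b : ℕ} (ha : a < n) (hb : b < n) :
    (((a : ℕ) : Fin n) = ((b : ℕ) : Fin n)) ↔ a = b := by
  rw [Fin.ext_iff, fin_val_cast ha, fin_val_cast hb]

end Helpers
section Evals
variable {n : ℕ} [NeZero n] (q : ℂ)

lemma Tk_bas (k : ℕ) (s : Fin n → Fin 2) :
    Tk n q k (bas s) =
      if s ((k - 1 : ℕ) : Fin n) = s ((k : ℕ) : Fin n) then q • bas s
      else if s ((k - 1 : ℕ) : Fin n) = 1 then bas (swapAt s ((k - 1 : ℕ) : Fin n) ((k : ℕ) : Fin n))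
      else bas (swapAt s ((k - 1 : ℕ) : Fin n) ((k : ℕ) : Fin n)) + (q - q⁻¹) • bas s := by
  rw [Tk, mkOp_bas]; rfl

lemma Sop_bas (k : ℕ) (s : Fin n → Fin 2) :
    Sop n q k (bas s) =
      if s ((k - 1 : ℕ) : Fin n) = s ((k : ℕ) : Fin n) then q • bas s
      else bas (swapAt s ((k - 1 : ℕ) : Fin n) ((k : ℕ) : Fin n)) := by
  rw [Sop, mkOp_bas]; rfl

lemma piOp_bas (Q : ℂ) (s : Fin n → Fin 2) :
    piOp n Q (bas s) = if s 0 = 0 then Q • bas s else (-Q⁻¹) • bas s := by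
  rw [piOp, mkOp_bas]

lemma TopInv_bas (k : ℕ) (s : Fin n → Fin 2) :
    TopInv n q k (bas s) =
      if s ((k - 1 : ℕ) : Fin n) = s ((k : ℕ) : Fin n) then q⁻¹ • bas s
      else if s ((k - 1 : ℕ) : Fin n) = 1
        then bas (swapAt s ((k - 1 : ℕ) : Fin n) ((k : ℕ) : Fin n)) - (q - q⁻¹) • bas s
      else bas (swapAt s ((k - 1 : ℕ) : Fin n) ((k : ℕ) : Fin n)) := by
  rw [TopInv, LinearMap.sub_apply, Tk_bas, LinearMap.smul_apply, Module.End.one_apply]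
  split_ifs with h1 h2
  · rw [← sub_smul]; ring_nf
  · abel
  · abel

end Evals
section SwapLemmas
variable {n : ℕ} [NeZero n]

lemma swapAt_snd (s : Fin n → Fin 2) (i j : Fin n) : swapAt s i j j = s i := by
  simp [swapAt_apply]

lemma swapAt_fst (s : Fin n → Fin 2) {i j : Fin n} (h : i ≠ j) : swapAt s i j i = s j := by
  simp [swapAt_apply, h]

lemma swapAt_other (s : Fin n → Fin 2) {i j x : Fin n} (hxi : x ≠ i) (hxj : x ≠ j) :
    swapAt s i j x = s x := by
  simp [swapAt_apply, hxi, hxj]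

lemma swapAt_swapAt (s : Fin n → Fin 2) {i j : Fin n} (h : i ≠ j) :
    swapAt (swapAt s i j) i j = s := by
  funext x
  rcases eq_or_ne x j with rfl | hxj
  · rw [swapAt_snd, swapAt_fst _ h]
  · rcases eq_or_ne x i with rfl | hxi
    · rw [swapAt_fst _ h, swapAt_snd]
    · rw [swapAt_other _ hxi hxj, swapAt_other _ hxi hxj]

end SwapLemmas

section Part1
variable {n : ℕ} [NeZero n] (q : ℂ)

lemma two_cases (v : Fin 2) : v = 0 ∨ v = 1 := by fin_cases v <;> simp

lemma T1q_bas (s : Fin n → Fin 2) :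
    (Tk n q 1 - q • 1 : Module.End ℂ (TS n)) (bas s) =
      if s ((0 : ℕ) : Fin n) = s ((1 : ℕ) : Fin n) then 0
      else if s ((0 : ℕ) : Fin n) = 1 then
        bas (swapAt s ((0 : ℕ) : Fin n) ((1 : ℕ) : Fin n)) - q • bas s
      else bas (swapAt s ((0 : ℕ) : Fin n) ((1 : ℕ) : Fin n)) - q⁻¹ • bas s := by
  have e : ((1 : ℕ) - 1 : ℕ) = (0 : ℕ) := by norm_num
  rw [LinearMap.sub_apply, LinearMap.smul_apply, Module.End.one_apply, Tk_bas, e]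
  split_ifs with h1 h2
  · rw [sub_self]
  · rfl
  · rw [add_sub_assoc, ← sub_smul]; ring_nf; rw [neg_smul, ← sub_eq_add_neg]

lemma T2q_bas (s : Fin n → Fin 2) :
    (Tk n q 2 - q • 1 : Module.End ℂ (TS n)) (bas s) =
      if s ((1 : ℕ) : Fin n) = s ((2 : ℕ) : Fin n) then 0
      else if s ((1 : ℕ) : Fin n) = 1 then
        bas (swapAt s ((1 : ℕ) : Fin n) ((2 : ℕ) : Fin n)) - q • bas s
      else bas (swapAt s ((1 : ℕ) : Fin n) ((2 : ℕ) : Fin n)) - q⁻¹ • bas s := by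
  have e : ((2 : ℕ) - 1 : ℕ) = (1 : ℕ) := by norm_num
  rw [LinearMap.sub_apply, LinearMap.smul_apply, Module.End.one_apply, Tk_bas, e]
  split_ifs with h1 h2
  · rw [sub_self]
  · rfl
  · rw [add_sub_assoc, ← sub_smul]; ring_nf; rw [neg_smul, ← sub_eq_add_neg]

end Part1
section Part1b
variable {n : ℕ} [NeZero n]

lemma part1 (hn : 3 ≤ n) (q : ℂ) (hq0 : q ≠ 0) :
    (Tk n q 1 - q • 1) * (Tk n q 2 - q • 1) * (Tk n q 1 - q • 1) -
      (Tk n q 1 - q • 1) = (0 : Module.End ℂ (TS n)) := by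
  refine sub_eq_zero.mpr (?_ : _ = (_ : Module.End ℂ (TS n)))
  apply endo_ext; intro s
  have h0 : (0:ℕ) < n := by omega
  have h1 : (1:ℕ) < n := by omega
  have h2 : (2:ℕ) < n := by omega
  have h01 : ((0:ℕ):Fin n) ≠ ((1:ℕ):Fin n) := by rw [Ne, cast_eq_cast_iff h0 h1]; omega
  have h12 : ((1:ℕ):Fin n) ≠ ((2:ℕ):Fin n) := by rw [Ne, cast_eq_cast_iff h1 h2]; omega
  have h02 : ((0:ℕ):Fin n) ≠ ((2:ℕ):Fin n) := by rw [Ne, cast_eq_cast_iff h0 h2]; omega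
  have f01 : (0 : Fin 2) ≠ 1 := by decide
  have f10 : (1 : Fin 2) ≠ 0 := by decide
  have TA := T1q_bas (n := n) q
  have TB := T2q_bas (n := n) q
  rw [Module.End.mul_apply, Module.End.mul_apply]
  rcases two_cases (s ((0:ℕ):Fin n)) with ha | ha <;>
  rcases two_cases (s ((1:ℕ):Fin n)) with hb | hb <;>
  rcases two_cases (s ((2:ℕ):Fin n)) with hc | hc <;>
  · simp only [TA, TB, ha, hb, hc, map_sub, map_smul, map_zero, map_add, map_neg,
      swapAt_fst _ h01, swapAt_fst _ h12, swapAt_snd,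
      swapAt_other _ h01.symm h12, swapAt_other _ h02.symm h12.symm,
      swapAt_other _ h01 h02, swapAt_swapAt _ h01, swapAt_swapAt _ h12,
      if_true, if_false, eq_self_iff_true, f01, f10, if_neg f01, if_neg f10,
      sub_zero, zero_sub, smul_zero, smul_sub, smul_smul, smul_neg, neg_neg, neg_zero]
    all_goals first
    | rfl
    | (rw [inv_mul_cancel₀ hq0]; module)
    | (rw [mul_inv_cancel₀ hq0]; module)
    | module
    | (match_scalars <;> field_simp)
end Part1b
section Part2Defs
variable (n : ℕ) [NeZero n]

/-- partial product `T_2⁻¹ T_3⁻¹ ⋯ T_{l+1}⁻¹` (rightmost applied first) -/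
def G2 (q : ℂ) (l : ℕ) : Module.End ℂ (TS n) :=
  ((List.range l).map fun k => TopInv n q (k + 2)).prod

/-- partial product `S_l S_{l-1} ⋯ S_1` -/
def SR (q : ℂ) (l : ℕ) : Module.End ℂ (TS n) :=
  (((List.range l).map fun k => Sop n q (k + 1)).reverse).prod

def cnt (s : Fin n → Fin 2) (v : Fin 2) (l : ℕ) : ℕ :=
  (List.range l).countP fun k => decide (s (((k + 1 : ℕ)) : Fin n) = v)

def rot (s : Fin n → Fin 2) (l : ℕ) : Fin n → Fin 2 := fun i =>
  if (i : ℕ) < l then s (((i : ℕ) + 1 : ℕ) : Fin n)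
  else if (i : ℕ) = l then s 0 else s i

def mv (s : Fin n → Fin 2) (l : ℕ) (a b : Fin 2) : Fin n → Fin 2 := fun i =>
  if (i : ℕ) = 0 then a else if (i : ℕ) = 1 then b
  else if (i : ℕ) ≤ l + 1 then s (((i : ℕ) - 1 : ℕ) : Fin n) else s i

variable {n}

lemma G2_zero (q : ℂ) : G2 n q 0 = 1 := by simp [G2]

lemma G2_succ (q : ℂ) (l : ℕ) : G2 n q (l + 1) = G2 n q l * TopInv n q (l + 2) := by
  rw [G2, List.range_succ, List.map_append, List.prod_append]; simp [G2]

lemma SR_zero (q : ℂ) : SR n q 0 = 1 := by simp [SR]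

lemma SR_succ (q : ℂ) (l : ℕ) : SR n q (l + 1) = Sop n q (l + 1) * SR n q l := by
  rw [SR, List.range_succ, List.map_append, List.reverse_append]; simp [SR]

lemma glist1 (q : ℂ) (l : ℕ) :
    ((List.range (l + 1)).map fun k => TopInv n q (k + 1)).prod = TopInv n q 1 * G2 n q l := by
  rw [List.range_succ_eq_map, List.map_cons, List.map_map, List.prod_cons]
  rfl

lemma cnt_succ (s : Fin n → Fin 2) (v : Fin 2) (l : ℕ) :
    cnt n s v (l + 1) = cnt n s v l + (if s ((l + 1 : ℕ) : Fin n) = v then 1 else 0) := by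
  rw [cnt, List.range_succ, List.countP_append, cnt]
  simp [List.countP_cons]

lemma cnt_congr {s₁ s₂ : Fin n → Fin 2} (v : Fin 2) (l : ℕ)
    (h : ∀ k, k < l → s₁ ((k + 1 : ℕ) : Fin n) = s₂ ((k + 1 : ℕ) : Fin n)) :
    cnt n s₁ v l = cnt n s₂ v l := by
  rw [cnt, cnt]
  refine List.countP_congr (fun k hk => ?_)
  rw [List.mem_range] at hk
  rw [h k hk]

lemma countP_range_succ_zero (p : ℕ → Bool) (l : ℕ) (h : p 0 = false) :
    (List.range (l + 1)).countP p = (List.range l).countP fun k => p (k + 1) := by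
  rw [List.range_succ_eq_map, List.countP_cons, List.countP_map, h]
  simp
  rfl

end Part2Defs
section Chains
variable {n : ℕ} [NeZero n]

lemma self_eq_cast {i : Fin n} {k : ℕ} (hk : k < n) (h : (i : ℕ) = k) :
    i = ((k : ℕ) : Fin n) := by
  apply Fin.ext; rw [fin_val_cast hk, h]

lemma rot_lt {i : Fin n} {l : ℕ} (h : (i : ℕ) < l) (s : Fin n → Fin 2) :
    rot n s l i = s (((i : ℕ) + 1 : ℕ) : Fin n) := by rw [rot, if_pos h]

lemma rot_eq {i : Fin n} {l : ℕ} (h : (i : ℕ) = l) (s : Fin n → Fin 2) :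
    rot n s l i = s 0 := by rw [rot, if_neg (by omega), if_pos h]

lemma rot_gt {i : Fin n} {l : ℕ} (h : l < (i : ℕ)) (s : Fin n → Fin 2) :
    rot n s l i = s i := by rw [rot, if_neg (by omega), if_neg (by omega)]

lemma mv_0 {i : Fin n} {l : ℕ} {a b : Fin 2} (h : (i : ℕ) = 0) (s : Fin n → Fin 2) :
    mv n s l a b i = a := by rw [mv]; simp [h]

lemma mv_1 {i : Fin n} {l : ℕ} {a b : Fin 2} (h : (i : ℕ) = 1) (s : Fin n → Fin 2) :
    mv n s l a b i = b := by rw [mv]; simp [h]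

lemma mv_mid {i : Fin n} {l : ℕ} {a b : Fin 2} (h2 : 2 ≤ (i : ℕ)) (hle : (i : ℕ) ≤ l + 1)
    (s : Fin n → Fin 2) : mv n s l a b i = s (((i : ℕ) - 1 : ℕ) : Fin n) := by
  simp only [mv]
  rw [if_neg (by omega), if_neg (by omega), if_pos hle]

lemma mv_high {i : Fin n} {l : ℕ} {a b : Fin 2} (h : l + 1 < (i : ℕ)) (s : Fin n → Fin 2) :
    mv n s l a b i = s i := by
  simp only [mv]
  rw [if_neg (by omega), if_neg (by omega), if_neg (by omega)]

variable (q : ℂ)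

lemma SChain : ∀ l, l + 1 ≤ n → ∀ s : Fin n → Fin 2,
    SR n q l (bas s) = q ^ (cnt n s (s 0) l) • bas (rot n s l) := by
  intro l
  induction l with
  | zero =>
    intro _ s
    have hz : ((0 : Fin n) : ℕ) = 0 := by simp
    have hr : rot n s 0 = s := by
      funext i
      rcases Nat.eq_zero_or_pos (i : ℕ) with h | h
      · rw [rot_eq h, show i = 0 from Fin.ext (by rw [hz, h])]
      · rw [rot_gt h]
    rw [SR_zero, hr, cnt]
    simp
  | succ l ih =>
    intro hl s
    have hln : l < n := by omega
    have hl1n : l + 1 < n := by omega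
    have vl : (((l : ℕ) : Fin n) : ℕ) = l := fin_val_cast hln
    have vl1 : (((l + 1 : ℕ) : Fin n) : ℕ) = l + 1 := fin_val_cast hl1n
    rw [SR_succ, Module.End.mul_apply, ih (by omega), map_smul, Sop_bas,
      Nat.add_sub_cancel]
    have e1 : (rot n s l) ((l : ℕ) : Fin n) = s 0 := rot_eq vl s
    have e2 : (rot n s l) ((l + 1 : ℕ) : Fin n) = s ((l + 1 : ℕ) : Fin n) := by
      rw [rot_gt (by omega : l < (((l + 1 : ℕ) : Fin n) : ℕ))]
    rw [e1, e2]
    by_cases h : s ((l + 1 : ℕ) : Fin n) = s 0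
    · rw [if_pos h.symm, cnt_succ, if_pos h]
      have hr : rot n s l = rot n s (l + 1) := by
        funext i
        rcases Nat.lt_trichotomy (i : ℕ) l with hi | hi | hi
        · rw [rot_lt hi, rot_lt (by omega)]
        · rw [rot_eq hi, rot_lt (by omega)]
          rw [show (((i : ℕ) + 1 : ℕ) : Fin n) = ((l + 1 : ℕ) : Fin n) by rw [hi], h]
        · rcases Nat.lt_or_ge (i : ℕ) (l + 2) with hi2 | hi2
          · have hie : (i : ℕ) = l + 1 := by omega
            rw [rot_gt hi, rot_eq hie, self_eq_cast hl1n hie, h]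
          · rw [rot_gt hi, rot_gt (by omega)]
      rw [smul_smul, hr, pow_succ]
    · rw [if_neg (fun hh => h hh.symm), cnt_succ, if_neg h]
      have hr : swapAt (rot n s l) ((l : ℕ) : Fin n) ((l + 1 : ℕ) : Fin n) = rot n s (l + 1) := by
        funext i
        rw [swapAt_apply]
        rcases Nat.lt_trichotomy (i : ℕ) l with hi | hi | hi
        · rw [if_neg (by intro hh; rw [hh, vl1] at hi; omega),
            if_neg (by intro hh; rw [hh, vl] at hi; omega), rot_lt hi, rot_lt (by omega)]
        · rw [if_neg (by intro hh; rw [hh, vl1] at hi; omega),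
            if_pos (self_eq_cast hln hi), e2, rot_lt (by omega : (i:ℕ) < l + 1)]
          rw [show (((i : ℕ) + 1 : ℕ) : Fin n) = ((l + 1 : ℕ) : Fin n) by rw [hi]]
        · rcases Nat.lt_or_ge (i : ℕ) (l + 2) with hi2 | hi2
          · have hie : (i : ℕ) = l + 1 := by omega
            rw [if_pos (self_eq_cast hl1n hie), e1, rot_eq hie]
          · rw [if_neg (by intro hh; rw [hh, vl1] at hi2; omega),
              if_neg (by intro hh; rw [hh, vl] at hi; omega), rot_gt hi, rot_gt (by omega)]
      rw [hr, add_zero]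

end Chains
section MLemmas
variable {n : ℕ} [NeZero n]

lemma ne_cast_of_val {i : Fin n} {k : ℕ} (hk : k < n) (h : (i : ℕ) ≠ k) :
    i ≠ ((k : ℕ) : Fin n) := fun hh => h (by rw [hh, fin_val_cast hk])

lemma cnt_swap {l a b : ℕ} (ha : l < a) (hb : l < b) (han : a < n) (hbn : b < n)
    (s : Fin n → Fin 2) (v : Fin 2) :
    cnt n (swapAt s ((a : ℕ) : Fin n) ((b : ℕ) : Fin n)) v l = cnt n s v l := by
  refine cnt_congr v l (fun k hk => ?_)
  have hkn : k + 1 < n := by omega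
  rw [swapAt_other _ (ne_cast_of_val han (by rw [fin_val_cast hkn]; omega))
    (ne_cast_of_val hbn (by rw [fin_val_cast hkn]; omega))]

lemma mv_swap_eq {l : ℕ} (hl : l + 3 ≤ n) (s : Fin n → Fin 2) (a b : Fin 2) :
    mv n (swapAt s ((l + 1 : ℕ) : Fin n) ((l + 2 : ℕ) : Fin n)) l a b = mv n s (l + 1) a b := by
  have h1n : l + 1 < n := by omega
  have h2n : l + 2 < n := by omega
  have hne : ((l + 1 : ℕ) : Fin n) ≠ ((l + 2 : ℕ) : Fin n) := by
    rw [Ne, cast_eq_cast_iff h1n h2n]; omega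
  funext i
  rcases Nat.lt_or_ge (i : ℕ) 2 with hi | hi
  · rcases Nat.lt_or_ge (i : ℕ) 1 with hi0 | hi0
    · rw [mv_0 (i := i) (by omega), mv_0 (i := i) (by omega)]
    · rw [mv_1 (i := i) (by omega), mv_1 (i := i) (by omega)]
  · rcases Nat.lt_or_ge (i : ℕ) (l + 2) with him | him
    · rw [mv_mid (i := i) hi (by omega), mv_mid (i := i) hi (by omega),
        swapAt_other _ (ne_cast_of_val h1n (by rw [fin_val_cast (by omega : (i:ℕ) - 1 < n)]; omega))
          (ne_cast_of_val h2n (by rw [fin_val_cast (by omega : (i:ℕ) - 1 < n)]; omega))]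
    · rcases Nat.lt_or_ge (i : ℕ) (l + 3) with hie | hie
      · have he : (i : ℕ) = l + 2 := by omega
        rw [mv_high (i := i) (by omega), mv_mid (i := i) hi (by omega), show ((i : ℕ) - 1 : ℕ) = l + 1 by omega,
          show i = _ from self_eq_cast h2n he, swapAt_snd]
      · rw [mv_high (i := i) (by omega), mv_high (i := i) (by omega),
          swapAt_other _ (ne_cast_of_val h1n (by omega)) (ne_cast_of_val h2n (by omega))]

lemma mv_step_eq {l : ℕ} (hl : l + 3 ≤ n) (s : Fin n → Fin 2) (a b : Fin 2)
    (h : s ((l + 2 : ℕ) : Fin n) = s ((l + 1 : ℕ) : Fin n)) :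
    mv n s l a b = mv n s (l + 1) a b := by
  have h2n : l + 2 < n := by omega
  funext i
  rcases Nat.lt_or_ge (i : ℕ) 2 with hi | hi
  · rcases Nat.lt_or_ge (i : ℕ) 1 with hi0 | hi0
    · rw [mv_0 (i := i) (by omega), mv_0 (i := i) (by omega)]
    · rw [mv_1 (i := i) (by omega), mv_1 (i := i) (by omega)]
  · rcases Nat.lt_or_ge (i : ℕ) (l + 2) with him | him
    · rw [mv_mid (i := i) hi (by omega), mv_mid (i := i) hi (by omega)]
    · rcases Nat.lt_or_ge (i : ℕ) (l + 3) with hie | hie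
      · have he : (i : ℕ) = l + 2 := by omega
        rw [mv_high (i := i) (by omega), mv_mid (i := i) hi (by omega), show ((i : ℕ) - 1 : ℕ) = l + 1 by omega,
          show i = _ from self_eq_cast h2n he, h]
      · rw [mv_high (i := i) (by omega), mv_high (i := i) (by omega)]

variable (q : ℂ)

lemma M1 : ∀ l, l + 2 ≤ n → ∀ s : Fin n → Fin 2, s ((l + 1 : ℕ) : Fin n) = 1 →
    G2 n q l (bas s) = (q⁻¹) ^ (cnt n s 1 l) • bas (mv n s l (s 0) 1) := by
  intro l
  induction l with
  | zero =>
    intro hl s hs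
    have h1 : s ((1 : ℕ) : Fin n) = 1 := by simpa using hs
    have hm : mv n s 0 (s 0) 1 = s := by
      funext i
      rcases Nat.lt_or_ge (i : ℕ) 1 with hi0 | hi0
      · rw [mv_0 (i := i) (by omega)]
        rw [show i = 0 from Fin.ext (by rw [show ((0 : Fin n) : ℕ) = 0 by simp]; omega)]
      · rcases Nat.lt_or_ge (i : ℕ) 2 with hi1 | hi1
        · rw [mv_1 (i := i) (by omega), show i = _ from self_eq_cast (by omega : 1 < n) (by omega), h1]
        · rw [mv_high (i := i) (by omega)]
    rw [G2_zero, hm, cnt]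
    simp
  | succ l ih =>
    intro hl s hs
    rw [show l + 1 + 1 = l + 2 from rfl] at hs
    have h1n : l + 1 < n := by omega
    have h2n : l + 2 < n := by omega
    have hne : ((l + 1 : ℕ) : Fin n) ≠ ((l + 2 : ℕ) : Fin n) := by
      rw [Ne, cast_eq_cast_iff h1n h2n]; omega
    rw [G2_succ, Module.End.mul_apply, TopInv_bas, show (l + 2 - 1 : ℕ) = l + 1 by omega]
    by_cases hc : s ((l + 1 : ℕ) : Fin n) = 1
    · rw [if_pos (by rw [hs, hc]), map_smul, ih (by omega) s hc, cnt_succ, if_pos hc,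
        mv_step_eq (by omega) s (s 0) 1 (by rw [hs, hc]), smul_smul, pow_succ]
      ring_nf
    · rw [if_neg (by rw [hs]; exact hc), if_neg hc]
      have hs2 : (swapAt s ((l + 1 : ℕ) : Fin n) ((l + 2 : ℕ) : Fin n)) ((l + 1 : ℕ) : Fin n) = 1 := by
        rw [swapAt_fst _ hne, hs]
      rw [ih (by omega) _ hs2, cnt_swap (by omega) (by omega) h1n h2n,
        swapAt_other _ (show (0 : Fin n) ≠ _ from ne_cast_of_val h1n (by simp))
          (show (0 : Fin n) ≠ _ from ne_cast_of_val h2n (by simp)),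
        mv_swap_eq (by omega), cnt_succ, if_neg hc, add_zero]

lemma M3 : ∀ l, l + 2 ≤ n → ∀ s : Fin n → Fin 2, s 0 = 1 → s ((l + 1 : ℕ) : Fin n) = 1 →
    (Tk n q 1 - q • 1 : Module.End ℂ (TS n)) (G2 n q l (bas s)) = 0 := by
  intro l
  induction l with
  | zero =>
    intro hl s h0 hs
    have h1 : s ((1 : ℕ) : Fin n) = 1 := by simpa using hs
    rw [G2_zero, Module.End.one_apply, T1q_bas, if_pos (by rw [Nat.cast_zero, h0, h1])]
  | succ l ih =>
    intro hl s h0 hs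
    rw [show l + 1 + 1 = l + 2 from rfl] at hs
    have h1n : l + 1 < n := by omega
    have h2n : l + 2 < n := by omega
    have hne : ((l + 1 : ℕ) : Fin n) ≠ ((l + 2 : ℕ) : Fin n) := by
      rw [Ne, cast_eq_cast_iff h1n h2n]; omega
    rw [G2_succ, Module.End.mul_apply, TopInv_bas, show (l + 2 - 1 : ℕ) = l + 1 by omega]
    by_cases hc : s ((l + 1 : ℕ) : Fin n) = 1
    · rw [if_pos (by rw [hs, hc]), map_smul, map_smul, ih (by omega) s h0 hc, smul_zero]
    · rw [if_neg (by rw [hs]; exact hc), if_neg hc]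
      refine ih (by omega) _ ?_ ?_
      · rw [swapAt_other _ (show (0 : Fin n) ≠ _ from ne_cast_of_val h1n (by simp))
          (show (0 : Fin n) ≠ _ from ne_cast_of_val h2n (by simp)), h0]
      · rw [swapAt_fst _ hne, hs]

end MLemmas
section M2sec
variable {n : ℕ} [NeZero n] (q : ℂ)

lemma M2 : ∀ l, l + 2 ≤ n → ∀ s : Fin n → Fin 2, s 0 = 1 → s ((l + 1 : ℕ) : Fin n) = 0 →
    (Tk n q 1 - q • 1 : Module.End ℂ (TS n)) (G2 n q l (bas s)) =
      (q⁻¹) ^ (cnt n s 0 l) •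
        (bas (mv n s l 0 1) - q • bas (mv n s l 1 0)) := by
  intro l
  induction l with
  | zero =>
    intro hl s h0 hs
    have h1 : s ((1 : ℕ) : Fin n) = 0 := by simpa using hs
    have h01 : ((0:ℕ):Fin n) ≠ ((1:ℕ):Fin n) := by
      rw [Ne, cast_eq_cast_iff (by omega) (by omega)]; omega
    have hm1 : mv n s 0 1 0 = s := by
      funext i
      rcases Nat.lt_or_ge (i : ℕ) 1 with hi0 | hi0
      · rw [mv_0 (i := i) (by omega), show i = 0 from Fin.ext (by rw [show ((0 : Fin n) : ℕ) = 0 by simp]; omega), h0]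
      · rcases Nat.lt_or_ge (i : ℕ) 2 with hi1 | hi1
        · rw [mv_1 (i := i) (by omega),
            show i = _ from self_eq_cast (by omega : 1 < n) (by omega), h1]
        · rw [mv_high (i := i) (by omega)]
    have hm2 : mv n s 0 0 1 = swapAt s ((0:ℕ):Fin n) ((1:ℕ):Fin n) := by
      funext i
      rcases Nat.lt_or_ge (i : ℕ) 1 with hi0 | hi0
      · rw [mv_0 (i := i) (by omega),
          show i = _ from self_eq_cast (by omega : 0 < n) (by omega), swapAt_fst _ h01, h1]
      · rcases Nat.lt_or_ge (i : ℕ) 2 with hi1 | hi1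
        · rw [mv_1 (i := i) (by omega),
            show i = _ from self_eq_cast (by omega : 1 < n) (by omega), swapAt_snd,
            Nat.cast_zero, h0]
        · rw [mv_high (i := i) (by omega),
            swapAt_other _ (ne_cast_of_val (by omega) (by omega))
              (ne_cast_of_val (by omega) (by omega))]
    have hc1 : s ((0:ℕ):Fin n) ≠ s ((1:ℕ):Fin n) := by
      rw [Nat.cast_zero, h0, h1]; decide
    have hc2 : s ((0:ℕ):Fin n) = 1 := by rw [Nat.cast_zero, h0]
    rw [G2_zero, Module.End.one_apply, T1q_bas, if_neg hc1, if_pos hc2, hm1, hm2, cnt]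
    simp
  | succ l ih =>
    intro hl s h0 hs
    rw [show l + 1 + 1 = l + 2 from rfl] at hs
    have h1n : l + 1 < n := by omega
    have h2n : l + 2 < n := by omega
    have hne : ((l + 1 : ℕ) : Fin n) ≠ ((l + 2 : ℕ) : Fin n) := by
      rw [Ne, cast_eq_cast_iff h1n h2n]; omega
    rw [G2_succ, Module.End.mul_apply, TopInv_bas, show (l + 2 - 1 : ℕ) = l + 1 by omega]
    rcases two_cases (s ((l + 1 : ℕ) : Fin n)) with hc | hc
    · rw [if_pos (by rw [hs, hc]), map_smul, map_smul, ih (by omega) s h0 hc,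
        cnt_succ, if_pos hc, mv_step_eq (by omega) s 0 1 (by rw [hs, hc]),
        mv_step_eq (by omega) s 1 0 (by rw [hs, hc]), smul_smul, pow_succ]
      ring_nf
    · rw [if_neg (fun hh => by rw [hc, hs] at hh; exact absurd hh (by decide)), if_pos hc,
        map_sub, map_smul, map_sub, map_smul, M3 q l (by omega) s h0 hc, smul_zero, sub_zero]
      have hsw0 : (swapAt s ((l + 1 : ℕ) : Fin n) ((l + 2 : ℕ) : Fin n)) 0 = 1 := by
        rw [swapAt_other _ (show (0 : Fin n) ≠ _ from ne_cast_of_val h1n (by simp))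
          (show (0 : Fin n) ≠ _ from ne_cast_of_val h2n (by simp)), h0]
      have hsw1 : (swapAt s ((l + 1 : ℕ) : Fin n) ((l + 2 : ℕ) : Fin n)) ((l + 1 : ℕ) : Fin n) = 0 := by
        rw [swapAt_fst _ hne, hs]
      rw [ih (by omega) _ hsw0 hsw1, cnt_swap (by omega) (by omega) h1n h2n,
        mv_swap_eq (by omega), mv_swap_eq (by omega), cnt_succ, if_neg (by rw [hc]; decide),
        add_zero]

lemma TqT1inv (hn2 : 2 ≤ n) (hq0 : q ≠ 0) (x : TS n) :
    (Tk n q 1 - q • 1 : Module.End ℂ (TS n)) (TopInv n q 1 x) =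
      (-q) • (Tk n q 1 - q • 1 : Module.End ℂ (TS n)) x := by
  have key : (Tk n q 1 - q • 1 : Module.End ℂ (TS n)) * TopInv n q 1 =
      (-q) • (Tk n q 1 - q • 1) := by
    apply endo_ext; intro s
    have h0n : (0:ℕ) < n := by omega
    have h1n : (1:ℕ) < n := by omega
    have hab : ((0:ℕ):Fin n) ≠ ((1:ℕ):Fin n) := by
      rw [Ne, cast_eq_cast_iff h0n h1n]; omega
    have f01 : (0 : Fin 2) ≠ 1 := by decide
    have f10 : (1 : Fin 2) ≠ 0 := by decide
    rw [Module.End.mul_apply, LinearMap.smul_apply, TopInv_bas,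
      show (1 - 1 : ℕ) = 0 by norm_num]
    rcases two_cases (s ((0:ℕ):Fin n)) with h0 | h0 <;>
      rcases two_cases (s ((1:ℕ):Fin n)) with h1 | h1 <;>
    · simp only [h0, h1, T1q_bas, map_sub, map_smul, map_zero, map_neg, map_add,
        swapAt_fst _ hab, swapAt_snd, swapAt_swapAt _ hab, f01, f10, if_neg f01, if_neg f10,
        if_true, if_false, eq_self_iff_true, smul_zero, smul_sub, smul_smul, smul_neg,
        sub_zero, zero_sub, neg_neg, neg_zero]
      all_goals first
      | rfl
      | module
      | (match_scalars <;> (try field_simp) <;> try ring)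
  calc (Tk n q 1 - q • 1 : Module.End ℂ (TS n)) (TopInv n q 1 x)
      = ((Tk n q 1 - q • 1 : Module.End ℂ (TS n)) * TopInv n q 1) x := rfl
    _ = ((-q) • (Tk n q 1 - q • 1 : Module.End ℂ (TS n))) x := by rw [key]
    _ = (-q) • (Tk n q 1 - q • 1 : Module.End ℂ (TS n)) x := rfl

end M2sec
section Bridge
variable {n : ℕ} [NeZero n]

lemma mv_rot_eq (hn3 : 3 ≤ n) (u v : Fin n → Fin 2) (a b : Fin 2)
    (h0 : v 0 = a) (h1 : v ((1 : ℕ) : Fin n) = b)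
    (hrest : ∀ i : Fin n, 2 ≤ (i : ℕ) → u i = v i) :
    mv n (rot n u (n - 2 + 1)) (n - 2) a b = v := by
  funext i
  have hin := i.isLt
  rcases Nat.lt_or_ge (i : ℕ) 1 with hi0 | hi0
  · rw [mv_0 (i := i) (by omega), show i = 0 from Fin.ext (by rw [show ((0 : Fin n) : ℕ) = 0 by simp]; omega), h0]
  · rcases Nat.lt_or_ge (i : ℕ) 2 with hi1 | hi1
    · rw [mv_1 (i := i) (by omega),
        show i = _ from self_eq_cast (by omega : 1 < n) (by omega), h1]
    · rw [mv_mid (i := i) hi1 (by omega),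
        rot_lt (i := (((i : ℕ) - 1 : ℕ) : Fin n)) (by rw [fin_val_cast (by omega)]; omega),
        fin_val_cast (by omega : (i : ℕ) - 1 < n), show ((i : ℕ) - 1 + 1 : ℕ) = (i : ℕ) by omega,
        Fin.cast_val_eq_self, hrest i hi1]

lemma cnt_rot (hn3 : 3 ≤ n) (u : Fin n → Fin 2) (v : Fin 2)
    (h : u ((1 : ℕ) : Fin n) ≠ v) :
    cnt n u v (n - 2 + 1) = cnt n (rot n u (n - 2 + 1)) v (n - 2) := by
  rw [cnt, countP_range_succ_zero _ _ (by simpa using h), cnt]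
  refine List.countP_congr (fun k hk => ?_)
  rw [List.mem_range] at hk
  have e : (rot n u (n - 2 + 1)) ((k + 1 : ℕ) : Fin n) = u ((k + 1 + 1 : ℕ) : Fin n) := by
    rw [rot_lt (i := ((k + 1 : ℕ) : Fin n)) (by rw [fin_val_cast (by omega)]; omega),
      fin_val_cast (by omega : k + 1 < n)]
  simp only [e]

end Bridge
section Main2
variable {n : ℕ} [NeZero n]

lemma main2 (hn : 3 ≤ n) (q : ℂ) (hq0 : q ≠ 0) (Q : ℂ) (hQ0 : Q ≠ 0)
    (s : Fin n → Fin 2) (h0 : s ((0 : ℕ) : Fin n) = 0) (h1 : s ((1 : ℕ) : Fin n) = 1) :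
    (Tk n q 1 - q • 1 : Module.End ℂ (TS n))
        ((Tzero n q Q - Q • 1) ((Tk n q 1 - q • 1 : Module.End ℂ (TS n)) (bas s))) =
      (Q / q + q / Q) • (Tk n q 1 - q • 1 : Module.End ℂ (TS n)) (bas s) := by
  have h0n : (0:ℕ) < n := by omega
  have h1n : (1:ℕ) < n := by omega
  have hab : ((0:ℕ):Fin n) ≠ ((1:ℕ):Fin n) := by rw [Ne, cast_eq_cast_iff h0n h1n]; omega
  set s' := swapAt s ((0:ℕ):Fin n) ((1:ℕ):Fin n) with hs'def
  have hs'a : s' ((0:ℕ):Fin n) = 1 := by rw [hs'def, swapAt_fst _ hab, h1]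
  have hs'b : s' ((1:ℕ):Fin n) = 0 := by rw [hs'def, swapAt_snd, h0]
  have hz : (0 : Fin n) = ((0:ℕ):Fin n) := by norm_num
  have hs'0 : s' 0 = 1 := by rw [hz, hs'a]
  have hs0 : s 0 = 0 := by rw [hz, h0]
  -- step A
  have hw : (Tk n q 1 - q • 1 : Module.End ℂ (TS n)) (bas s) = bas s' - q⁻¹ • bas s := by
    rw [T1q_bas, if_neg (by rw [h0, h1]; decide), if_neg (by rw [h0]; decide), ← hs'def]
  have hw' : (Tk n q 1 - q • 1 : Module.End ℂ (TS n)) (bas s') = bas s - q • bas s' := by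
    rw [T1q_bas, if_neg (by rw [hs'a, hs'b]; decide), if_pos hs'a, hs'def, swapAt_swapAt _ hab]
  -- Tzero structure
  have hT : Tzero n q Q = (TopInv n q 1 * G2 n q (n-2)) * SR n q (n-2+1) * piOp n Q := by
    rw [Tzero, show n - 1 = n - 2 + 1 by omega, glist1]
    rfl
  have hsub : ∀ x : TS n, (Tzero n q Q - Q • 1 : Module.End ℂ (TS n)) x
      = TopInv n q 1 (G2 n q (n-2) (SR n q (n-2+1) (piOp n Q x))) - Q • x := by
    intro x
    rw [LinearMap.sub_apply, LinearMap.smul_apply, Module.End.one_apply, hT,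
      Module.End.mul_apply, Module.End.mul_apply, Module.End.mul_apply]
  -- piOp values
  have hpi1 : piOp n Q (bas s') = (-Q⁻¹) • bas s' := by
    rw [piOp_bas, if_neg (by rw [hs'0]; decide)]
  have hpi2 : piOp n Q (bas s) = Q • bas s := by rw [piOp_bas, if_pos hs0]
  -- rotation targets
  set t := rot n s (n-2+1) with htdef
  set t' := rot n s' (n-2+1) with ht'def
  have hvlast : (((n-2+1 : ℕ) : Fin n) : ℕ) = n-2+1 := fin_val_cast (by omega)
  have ht'last : t' ((n-2+1 : ℕ) : Fin n) = 1 := by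
    rw [ht'def, rot_eq hvlast, hs'0]
  have htlast : t ((n-2+1 : ℕ) : Fin n) = 0 := by
    rw [htdef, rot_eq hvlast, hs0]
  have hv0 : ((0 : Fin n) : ℕ) = 0 := by simp
  have ht'0 : t' 0 = 0 := by
    rw [ht'def, rot_lt (i := (0 : Fin n)) (by omega), hv0,
      show ((0:ℕ) + 1 : ℕ) = 1 from rfl, hs'b]
  have ht0 : t 0 = 1 := by
    rw [htdef, rot_lt (i := (0 : Fin n)) (by omega), hv0,
      show ((0:ℕ) + 1 : ℕ) = 1 from rfl, h1]
  -- exponents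
  set E1 := cnt n t' 1 (n-2) with hE1
  set E0 := cnt n t 0 (n-2) with hE0
  have c1 : cnt n s' 1 (n-2+1) = E1 := by
    rw [hE1, ht'def]; exact cnt_rot hn s' 1 (by rw [hs'b]; decide)
  have c0 : cnt n s 0 (n-2+1) = E0 := by
    rw [hE0, htdef]; exact cnt_rot hn s 0 (by rw [h1]; decide)
  -- S-chain values
  have hSR' : SR n q (n-2+1) (bas s') = q ^ E1 • bas t' := by
    have h := SChain q (n-2+1) (by omega) s'
    rw [hs'0, c1, ← ht'def] at h
    exact h
  have hSR : SR n q (n-2+1) (bas s) = q ^ E0 • bas t := by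
    have h := SChain q (n-2+1) (by omega) s
    rw [hs0, c0, ← htdef] at h
    exact h
  -- G2 values
  have hM1 : G2 n q (n-2) (bas t') = (q⁻¹) ^ E1 • bas s := by
    have h := M1 q (n-2) (by omega) t' ht'last
    rw [ht'0, ← hE1] at h
    rw [h, ht'def, mv_rot_eq hn s' s 0 1 hs0 h1
      (fun i hi => swapAt_other _ (ne_cast_of_val h0n (by omega)) (ne_cast_of_val h1n (by omega)))]
  have hM2 : (Tk n q 1 - q • 1 : Module.End ℂ (TS n)) (G2 n q (n-2) (bas t)) =
      (q⁻¹) ^ E0 • (bas s - q • bas s') := by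
    have h := M2 q (n-2) (by omega) t ht0 htlast
    rw [← hE0] at h
    rw [h, htdef, mv_rot_eq hn s s 0 1 hs0 h1 (fun i hi => rfl),
      mv_rot_eq hn s s' 1 0 hs'0 hs'b
        (fun i hi => (swapAt_other _ (ne_cast_of_val h0n (by omega))
          (ne_cast_of_val h1n (by omega))).symm)]
  -- the commutation
  have hTq : ∀ x : TS n, (Tk n q 1 - q • 1 : Module.End ℂ (TS n)) (TopInv n q 1 x) =
      (-q) • (Tk n q 1 - q • 1 : Module.End ℂ (TS n)) x := TqT1inv q (by omega) hq0
  -- assemble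
  rw [hw]
  simp only [hsub, map_sub, map_smul, hpi1, hpi2, hSR', hSR,
    hTq, hM1, hM2, hw, hw', smul_sub, smul_smul, map_neg, smul_neg]
  have hp1 : q ^ E1 * q⁻¹ ^ E1 = 1 := by
    rw [← mul_pow, mul_inv_cancel₀ hq0, one_pow]
  have hp0 : q ^ E0 * q⁻¹ ^ E0 = 1 := by
    rw [← mul_pow, mul_inv_cancel₀ hq0, one_pow]
  match_scalars
  · field_simp [hq0, hQ0]
    linear_combination (q ^ 2) * hp1 - (q ^ 2 * Q ^ 2) * hp0
  · field_simp [hq0, hQ0]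
    linear_combination -(q ^ 2) * hp1 + (q ^ 2 * Q ^ 2) * hp0
end Main2

/-- The generators of the ideal `J_n` of the type `B` Hecke algebra annihilate the
Ariki–Terasoma–Yamada tensor space: the endomorphisms
`(T_1 - q)(T_2 - q)(T_1 - q) - (T_1 - q)` and
`(T_1 - q)(T_0 - Q)(T_1 - q) - [2]_{Q/q}(T_1 - q)` of `V^{⊗n}` are zero. -/
theorem statement11 (n : ℕ) [NeZero n] (hn : 3 ≤ n) (q : ℂ) (hq0 : q ≠ 0)
    (hq1 : q ≠ 1) (hqm1 : q ≠ -1) (m : ℤ) (Q : ℂ) (hQ : Q = Complex.I * q ^ m) :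
    (Tk n q 1 - q • 1) * (Tk n q 2 - q • 1) * (Tk n q 1 - q • 1) -
        (Tk n q 1 - q • 1) = 0 ∧
      (Tk n q 1 - q • 1) * (Tzero n q Q - Q • 1) * (Tk n q 1 - q • 1) -
        (Q / q + q / Q) • (Tk n q 1 - q • 1) = 0 := by
  have hQ0 : Q ≠ 0 := by
    rw [hQ]; exact mul_ne_zero Complex.I_ne_zero (zpow_ne_zero m hq0)
  refine ⟨part1 hn q hq0, ?_⟩
  refine sub_eq_zero.mpr (?_ : _ = (_ : Module.End ℂ (TS n)))
  apply endo_ext; intro s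
  rw [Module.End.mul_apply, Module.End.mul_apply, LinearMap.smul_apply]
  have h0n : (0:ℕ) < n := by omega
  have h1n : (1:ℕ) < n := by omega
  have hab : ((0:ℕ):Fin n) ≠ ((1:ℕ):Fin n) := by rw [Ne, cast_eq_cast_iff h0n h1n]; omega
  rcases two_cases (s ((0:ℕ):Fin n)) with h0 | h0 <;>
    rcases two_cases (s ((1:ℕ):Fin n)) with h1 | h1
  · rw [T1q_bas, if_pos (by rw [h0, h1]), map_zero, map_zero, smul_zero]
  · exact main2 hn q hq0 Q hQ0 s h0 h1
  · -- s = (1,0,...): reduce to the swapped sequence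
    have hs20 : (swapAt s ((0:ℕ):Fin n) ((1:ℕ):Fin n)) ((0:ℕ):Fin n) = 0 := by
      rw [swapAt_fst _ hab, h1]
    have hs21 : (swapAt s ((0:ℕ):Fin n) ((1:ℕ):Fin n)) ((1:ℕ):Fin n) = 1 := by
      rw [swapAt_snd, h0]
    have key : (Tk n q 1 - q • 1 : Module.End ℂ (TS n)) (bas s) =
        (-q) • (Tk n q 1 - q • 1 : Module.End ℂ (TS n))
          (bas (swapAt s ((0:ℕ):Fin n) ((1:ℕ):Fin n))) := by
      rw [T1q_bas, if_neg (by rw [h0, h1]; decide), if_pos h0, T1q_bas,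
        if_neg (by rw [hs20, hs21]; decide), if_neg (by rw [hs20]; decide),
        swapAt_swapAt _ hab]
      match_scalars <;> field_simp
    rw [key, map_smul, map_smul, main2 hn q hq0 Q hQ0 _ hs20 hs21, smul_smul, smul_smul,
      mul_comm]
  · rw [T1q_bas, if_pos (by rw [h0, h1]), map_zero, map_zero, smul_zero]

end
end

section
/- Let (A, ≤) be a linearly ordered set and let v be a word over A obtained from a word w by a single elementary Knuth transformation: replacing a consecutive factor y z x by y x z, or a consecutive factor x z y by z x y, where x < y < z in A, or the inverse of either replacement. Then the maximum length of a decreasing subsequence of v equals the maximum length of a decreasing subsequence of w. -/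
/-- `v` is obtained from `w` by a single elementary Knuth transformation over the
linearly ordered alphabet `A`: replacing a consecutive factor `y z x` by `y x z`, or a
consecutive factor `x z y` by `z x y`, where `x < y < z`, or the inverse of either
replacement. -/
def ElemKnuth {A : Type*} [LinearOrder A] (w v : List A) : Prop :=
  ∃ l₁ l₂ : List A, ∃ x y z : A, x < y ∧ y < z ∧
    ((w = l₁ ++ [y, z, x] ++ l₂ ∧ v = l₁ ++ [y, x, z] ++ l₂) ∨
     (w = l₁ ++ [y, x, z] ++ l₂ ∧ v = l₁ ++ [y, z, x] ++ l₂) ∨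
     (w = l₁ ++ [x, z, y] ++ l₂ ∧ v = l₁ ++ [z, x, y] ++ l₂) ∨
     (w = l₁ ++ [z, x, y] ++ l₂ ∧ v = l₁ ++ [x, z, y] ++ l₂))

/-- the maximum length of a decreasing subsequence of a word over a linearly
ordered alphabet -/
noncomputable def maxDecLen {A : Type*} [LinearOrder A] (u : List A) : ℕ :=
  sSup {k | ∃ v : List A, v.Sublist u ∧ v.Chain' (· > ·) ∧ v.length = k}

@[simp] private lemma chain'_iff_isChain' {A : Type*} (R : A → A → Prop) (l : List A) :
    l.Chain' R ↔ l.IsChain R := Iff.rfl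

private def Good {A : Type*} [LinearOrder A] (m₁ m₂ : List A) : Prop :=
  ∀ t : List A, t.Sublist m₁ → t.Chain' (· > ·) →
    ∃ t' : List A, t'.Sublist m₂ ∧ t'.Chain' (· > ·) ∧ t'.length = t.length ∧
      (∀ a b, t.head? = some a → t'.head? = some b → b ≤ a) ∧
      (∀ a b, t.getLast? = some a → t'.getLast? = some b → a ≤ b)

private lemma decLen_le {A : Type*} [LinearOrder A] (l₁ l₂ m₁ m₂ : List A)
    (H : Good m₁ m₂) :
    maxDecLen (l₁ ++ m₁ ++ l₂) ≤ maxDecLen (l₁ ++ m₂ ++ l₂) := by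
  apply csSup_le_csSup
  · exact ⟨(l₁ ++ m₂ ++ l₂).length, fun k ⟨u, hu, _, hl⟩ => hl ▸ hu.length_le⟩
  · exact ⟨0, [], List.nil_sublist _, List.isChain_nil, rfl⟩
  · rintro k ⟨u, hu, hc, hl⟩
    rw [List.sublist_append_iff] at hu
    obtain ⟨s, u₂, rfl, hs, hu₂⟩ := hu
    rw [List.sublist_append_iff] at hs
    obtain ⟨u₁, t, rfl, hu₁, ht⟩ := hs
    have hcfull := hc
    rw [chain'_iff_isChain', List.isChain_append, List.isChain_append] at hc
    obtain ⟨⟨hc₁, hct, hlink₁⟩, hc₂, hlink₂⟩ := hc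
    obtain ⟨t', hts, hct', hlen, hhead, hlast⟩ := H t ht hct
    rcases eq_or_ne t' [] with rfl | hne
    · have h0 : t = [] := List.eq_nil_of_length_eq_zero (by simpa using hlen.symm)
      subst h0
      exact ⟨u₁ ++ [] ++ u₂, (hu₁.append (List.nil_sublist _)).append hu₂, hcfull, hl⟩
    · have htne : t ≠ [] := by
        intro h; rw [h] at hlen
        exact hne (List.eq_nil_of_length_eq_zero hlen)
      refine ⟨u₁ ++ t' ++ u₂, (hu₁.append hts).append hu₂, ?_, ?_⟩
      · rw [chain'_iff_isChain', List.isChain_append, List.isChain_append]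
        refine ⟨⟨hc₁, hct', ?_⟩, hc₂, ?_⟩
        · intro a ha b hb
          have h1 := hlink₁ a ha (t.head htne) (List.head?_eq_head htne)
          have h2 := hhead (t.head htne) b (List.head?_eq_head htne) hb
          exact lt_of_le_of_lt h2 h1
        · intro a ha b hb
          rw [List.getLast?_append, List.getLast?_eq_getLast hne] at ha
          simp only [Option.some_or, Option.mem_def, Option.some.injEq] at ha
          subst ha
          have h1 : t.getLast htne > b := by
            apply hlink₂ _ _ b hb
            rw [List.getLast?_append, List.getLast?_eq_getLast htne]
            simp
          have h2 := hlast (t.getLast htne) _ (List.getLast?_eq_getLast htne)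
            (List.getLast?_eq_getLast hne)
          exact lt_of_lt_of_le h1 h2
      · simpa [hlen] using hl

private lemma good1 {A : Type*} [LinearOrder A] {x y z : A} (hxy : x < y) (hyz : y < z) :
    Good [y, z, x] [y, x, z] := by
  intro t ht hc
  have hm := List.mem_sublists.mpr ht
  fin_cases hm
  · exact ⟨[], by simp, by simp, rfl, by simp, by simp⟩
  · exact ⟨[y], by simp, by simp, rfl, by simp, by simp⟩
  · exact ⟨[z], by simp, by simp, rfl, by simp, by simp⟩
  · simp at hc; exact absurd hc hyz.asymm
  · exact ⟨[x], by simp, by simp, rfl, by simp, by simp⟩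
  · exact ⟨[y, x], by simp, by simp [hxy], rfl, by simp, by simp⟩
  · refine ⟨[y, x], by simp, by simp [hxy], rfl, ?_, ?_⟩
    · intro a b h1 h2; simp at h1 h2; subst h1; subst h2; exact hyz.le
    · intro a b h1 h2; simp at h1 h2; subst h1; subst h2; exact le_refl x
  · simp at hc; exact absurd hc.1 hyz.asymm

private lemma good2 {A : Type*} [LinearOrder A] {x y z : A} (hxy : x < y) (hyz : y < z) :
    Good [y, x, z] [y, z, x] := by
  intro t ht hc
  have hm := List.mem_sublists.mpr ht
  fin_cases hm
  · exact ⟨[], by simp, by simp, rfl, by simp, by simp⟩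
  · exact ⟨[y], by simp, by simp, rfl, by simp, by simp⟩
  · exact ⟨[x], by simp, by simp, rfl, by simp, by simp⟩
  · exact ⟨[y, x], by simp, by simp [hxy], rfl, by simp, by simp⟩
  · exact ⟨[z], by simp, by simp, rfl, by simp, by simp⟩
  · simp at hc; exact absurd hc hyz.asymm
  · simp at hc; exact absurd hc (hxy.trans hyz).asymm
  · simp at hc; exact absurd hc.2 (hxy.trans hyz).asymm

private lemma good3 {A : Type*} [LinearOrder A] {x y z : A} (hxy : x < y) (hyz : y < z) :
    Good [x, z, y] [z, x, y] := by
  intro t ht hc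
  have hm := List.mem_sublists.mpr ht
  fin_cases hm
  · exact ⟨[], by simp, by simp, rfl, by simp, by simp⟩
  · exact ⟨[x], by simp, by simp, rfl, by simp, by simp⟩
  · exact ⟨[z], by simp, by simp, rfl, by simp, by simp⟩
  · simp at hc; exact absurd hc (hxy.trans hyz).asymm
  · exact ⟨[y], by simp, by simp, rfl, by simp, by simp⟩
  · simp at hc; exact absurd hc hxy.asymm
  · exact ⟨[z, y], by simp, by simp [hyz], rfl, by simp, by simp⟩
  · simp at hc; exact absurd hc.1 (hxy.trans hyz).asymm

private lemma good4 {A : Type*} [LinearOrder A] {x y z : A} (hxy : x < y) (hyz : y < z) :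
    Good [z, x, y] [x, z, y] := by
  intro t ht hc
  have hm := List.mem_sublists.mpr ht
  fin_cases hm
  · exact ⟨[], by simp, by simp, rfl, by simp, by simp⟩
  · exact ⟨[z], by simp, by simp, rfl, by simp, by simp⟩
  · exact ⟨[x], by simp, by simp, rfl, by simp, by simp⟩
  · refine ⟨[z, y], by simp, by simp [hyz], rfl, ?_, ?_⟩
    · intro a b h1 h2; simp at h1 h2; subst h1; subst h2; exact le_refl z
    · intro a b h1 h2; simp at h1 h2; subst h1; subst h2; exact hxy.le
  · exact ⟨[y], by simp, by simp, rfl, by simp, by simp⟩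
  · exact ⟨[z, y], by simp, by simp [hyz], rfl, by simp, by simp⟩
  · simp at hc; exact absurd hc hxy.asymm
  · simp at hc; exact absurd hc.2 hxy.asymm

/-- An elementary Knuth transformation preserves the maximum length of a decreasing
subsequence. -/
theorem statement12 {A : Type*} [LinearOrder A] (w v : List A) (h : ElemKnuth w v) :
    maxDecLen w = maxDecLen v := by
  obtain ⟨l₁, l₂, x, y, z, hxy, hyz, hcase⟩ := h
  rcases hcase with ⟨rfl, rfl⟩ | ⟨rfl, rfl⟩ | ⟨rfl, rfl⟩ | ⟨rfl, rfl⟩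
  · exact le_antisymm (decLen_le _ _ _ _ (good1 hxy hyz)) (decLen_le _ _ _ _ (good2 hxy hyz))
  · exact le_antisymm (decLen_le _ _ _ _ (good2 hxy hyz)) (decLen_le _ _ _ _ (good1 hxy hyz))
  · exact le_antisymm (decLen_le _ _ _ _ (good3 hxy hyz)) (decLen_le _ _ _ _ (good4 hxy hyz))
  · exact le_antisymm (decLen_le _ _ _ _ (good4 hxy hyz)) (decLen_le _ _ _ _ (good3 hxy hyz))
end
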